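/- arXiv:2503.21715 — 8 statements merged into one kernel-verified Lean document; each statement's English description precedes it below -/
import Mathlib

section
/- Let U_1, U_2 be i.i.d. uniform random variables on [0,1] and W_1 = 2 - 3|U_2 - U_1| - 6 U_1 (1 - U_1). Then E[W_1^2] = 1/2. -/
open MeasureTheory ProbabilityTheory

/-- Antiderivative fact: for constants A x, d/dy ((A - 3*(x-y))^3/9) = (A-3*(x-y))^2. -/
lemma aux_deriv1 (A x y : ℝ) :
    HasDerivAt (fun y : ℝ => (A - 3*(x-y))^3/9) ((A - 3*(x-y))^2) y := by
  have h1 : HasDerivAt (fun y : ℝ => A - 3*(x-y)) 3 y := by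
    have := ((hasDerivAt_id y).const_sub x).const_mul 3
    simpa using (this.const_sub A)
  have := (h1.pow 3).div_const 9
  refine this.congr_deriv ?_
  norm_num
  ring

lemma aux_deriv2 (A x y : ℝ) :
    HasDerivAt (fun y : ℝ => -((A - 3*(y-x))^3/9)) ((A - 3*(y-x))^2) y := by
  have h1 : HasDerivAt (fun y : ℝ => A - 3*(y-x)) (-3) y := by
    have := ((hasDerivAt_id y).sub_const x).const_mul 3
    simpa using (this.const_sub A)
  have := ((h1.pow 3).div_const 9).neg
  refine this.congr_deriv ?_
  norm_num
  ring

/-- inner integral -/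
lemma inner_integral (x : ℝ) (hx : x ∈ Set.Icc (0:ℝ) 1) :
    ∫ y in (0:ℝ)..1, (2 - 3 * |y - x| - 6 * x * (1 - x)) ^ 2
      = (2 - 6 * x * (1 - x)) / 2 := by
  obtain ⟨hx0, hx1⟩ := hx
  set A : ℝ := 2 - 6 * x * (1 - x) with hA
  have hcont : ∀ a b : ℝ, IntervalIntegrable
      (fun y => (2 - 3 * |y - x| - 6 * x * (1 - x)) ^ 2) volume a b := by
    intro a b
    apply Continuous.intervalIntegrable
    exact ((continuous_const.sub (continuous_const.mul ((continuous_id.sub continuous_const).abs))).sub continuous_const).pow 2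
  have hsplit := intervalIntegral.integral_add_adjacent_intervals
    (hcont 0 x) (hcont x 1)
  rw [← hsplit]
  have h1 : ∫ y in (0:ℝ)..x, (2 - 3 * |y - x| - 6 * x * (1 - x)) ^ 2
      = (A - 3*(x-x))^3/9 - (A - 3*(x-0))^3/9 := by
    rw [← intervalIntegral.integral_eq_sub_of_hasDerivAt
      (fun y _ => aux_deriv1 A x y) (by exact Continuous.intervalIntegrable (by fun_prop) ..)]
    apply intervalIntegral.integral_congr
    intro y hy
    rw [Set.uIcc_of_le hx0] at hy
    have : |y - x| = x - y := by
      rw [abs_of_nonpos] ; ring; linarith [hy.2]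
    show (2 - 3 * |y - x| - 6 * x * (1 - x)) ^ 2 = (A - 3*(x-y))^2
    rw [this, hA]
    ring
  have h2 : ∫ y in x..1, (2 - 3 * |y - x| - 6 * x * (1 - x)) ^ 2
      = -((A - 3*(1-x))^3/9) - -((A - 3*(x-x))^3/9) := by
    rw [← intervalIntegral.integral_eq_sub_of_hasDerivAt
      (fun y _ => aux_deriv2 A x y) (by exact Continuous.intervalIntegrable (by fun_prop) ..)]
    apply intervalIntegral.integral_congr
    intro y hy
    rw [Set.uIcc_of_le hx1] at hy
    have : |y - x| = y - x := by
      rw [abs_of_nonneg]; linarith [hy.1]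
    show (2 - 3 * |y - x| - 6 * x * (1 - x)) ^ 2 = (A - 3*(y-x))^2
    rw [this, hA]
    ring
  rw [h1, h2, hA]
  ring

/-- If `U 0, U 1` are i.i.d. uniform on `[0,1]` and
`W₁ = 2 - 3|U 1 - U 0| - 6 U 0 (1 - U 0)`, then `E[W₁²] = 1/2`. -/
theorem expectation_W_sq
    {Ω : Type*} [MeasurableSpace Ω] (P : Measure Ω) [IsProbabilityMeasure P]
    (U : Fin 2 → Ω → ℝ) (hmeas : ∀ i, Measurable (U i))
    (hindep : iIndepFun U P)
    (hunif : ∀ i, Measure.map (U i) P = volume.restrict (Set.Icc (0:ℝ) 1)) :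
    ∫ ω, (2 - 3 * |U 1 ω - U 0 ω| - 6 * U 0 ω * (1 - U 0 ω)) ^ 2 ∂P = 1 / 2 := by
  set f : ℝ × ℝ → ℝ := fun p => (2 - 3 * |p.2 - p.1| - 6 * p.1 * (1 - p.1)) ^ 2 with hf
  have hfc : Continuous f := by fun_prop
  have hUind : IndepFun (U 0) (U 1) P := hindep.indepFun (by decide)
  have hmap : Measure.map (fun ω => (U 0 ω, U 1 ω)) P
      = (Measure.map (U 0) P).prod (Measure.map (U 1) P) :=
    (indepFun_iff_map_prod_eq_prod_map_map (hmeas 0).aemeasurable (hmeas 1).aemeasurable).mp hUind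
  set I : Set ℝ := Set.Icc (0:ℝ) 1 with hI
  have hμ : Measure.map (fun ω => (U 0 ω, U 1 ω)) P
      = (volume.restrict I).prod (volume.restrict I) := by
    rw [hmap, hunif 0, hunif 1]
  have hprodres : (volume.restrict I).prod (volume.restrict I)
      = (volume : Measure (ℝ × ℝ)).restrict (I ×ˢ I) := by
    rw [Measure.volume_eq_prod, Measure.prod_restrict]
  have hint : Integrable f ((volume.restrict I).prod (volume.restrict I)) := by
    rw [hprodres]
    exact (hfc.continuousOn).integrableOn_compact (isCompact_Icc.prod isCompact_Icc)
  have step1 : ∫ ω, (2 - 3 * |U 1 ω - U 0 ω| - 6 * U 0 ω * (1 - U 0 ω)) ^ 2 ∂P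
      = ∫ p, f p ∂((volume.restrict I).prod (volume.restrict I)) := by
    rw [← hμ, integral_map (by exact ((hmeas 0).prodMk (hmeas 1)).aemeasurable)
      hfc.aestronglyMeasurable]
  rw [step1, integral_prod f hint]
  have step2 : ∀ x ∈ I, (∫ y in I, f (x, y)) = (2 - 6 * x * (1 - x)) / 2 := by
    intro x hx
    have : (∫ y in I, f (x, y)) = ∫ y in (0:ℝ)..1, f (x, y) := by
      rw [hI, MeasureTheory.integral_Icc_eq_integral_Ioc,
        ← intervalIntegral.integral_of_le (by norm_num)]
    rw [this]
    exact inner_integral x hx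
  rw [setIntegral_congr_fun measurableSet_Icc step2]
  have : (∫ x in I, (2 - 6 * x * (1 - x)) / 2)
      = ∫ x in (0:ℝ)..1, (2 - 6 * x * (1 - x)) / 2 := by
    rw [hI, MeasureTheory.integral_Icc_eq_integral_Ioc,
      ← intervalIntegral.integral_of_le (by norm_num)]
  rw [this]
  have key : ∀ x ∈ Set.uIcc (0:ℝ) 1, HasDerivAt (fun x : ℝ => x - (3/2)*x^2 + x^3)
      ((2 - 6 * x * (1 - x)) / 2) x := by
    intro x _
    have h1 := (hasDerivAt_id x)
    have h2 := ((hasDerivAt_pow 2 x).const_mul (3/2:ℝ))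
    have h3 := hasDerivAt_pow 3 x
    have := (h1.sub h2).add h3
    refine this.congr_deriv ?_
    norm_num
    ring
  rw [intervalIntegral.integral_eq_sub_of_hasDerivAt key
    (Continuous.intervalIntegrable (by fun_prop) ..)]
  norm_num
end

section
/- Let U_1, U_2, U_3 be i.i.d. uniform random variables on [0,1], and set W_1 = 2 - 3|U_2 - U_1| - 6 U_1(1 - U_1) and W_2 = 2 - 3|U_3 - U_2| - 6 U_2(1 - U_2). Then E[W_1 W_2] = -1/20. -/
open MeasureTheory ProbabilityTheory intervalIntegral


lemma aux_abs (y : ℝ) (hy : y ∈ Set.Icc (0:ℝ) 1) :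
    ∫ x in (0:ℝ)..1, |y - x| = y^2 - y + 1/2 := by
  obtain ⟨h0, h1⟩ := hy
  rw [← intervalIntegral.integral_add_adjacent_intervals (a := (0:ℝ)) (b := y) (c := 1)
    (by exact (continuous_const.sub continuous_id).abs.intervalIntegrable _ _)
    (by exact (continuous_const.sub continuous_id).abs.intervalIntegrable _ _)]
  have e1 : ∫ x in (0:ℝ)..y, |y - x| = ∫ x in (0:ℝ)..y, (y - x) := by
    apply intervalIntegral.integral_congr
    intro x hx
    rw [Set.uIcc_of_le h0] at hx
    exact abs_of_nonneg (by linarith [hx.2])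
  have e2 : ∫ x in y..(1:ℝ), |y - x| = ∫ x in y..(1:ℝ), (x - y) := by
    apply intervalIntegral.integral_congr
    intro x hx
    rw [Set.uIcc_of_le h1] at hx
    show |y - x| = x - y
    rw [abs_sub_comm]
    exact abs_of_nonneg (by linarith [hx.1])
  rw [e1, e2]
  rw [intervalIntegral.integral_sub intervalIntegrable_const intervalIntegral.intervalIntegrable_id,
      intervalIntegral.integral_sub intervalIntegral.intervalIntegrable_id intervalIntegrable_const]
  simp [integral_id]
  ring

lemma aux_quad : ∫ x in (0:ℝ)..1, 6*x*(1-x) = 1 := by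
  have h : ∀ x ∈ Set.uIcc (0:ℝ) 1, HasDerivAt (fun x : ℝ => 3*x^2 - 2*x^3) (6*x*(1-x)) x := by
    intro x _
    have := ((hasDerivAt_pow 2 x).const_mul (3:ℝ)).sub ((hasDerivAt_pow 3 x).const_mul (2:ℝ))
    refine this.congr_deriv ?_
    simp only [Nat.cast_ofNat, Nat.reduceSub]
    ring
  rw [intervalIntegral.integral_eq_sub_of_hasDerivAt h
    (by apply Continuous.intervalIntegrable; continuity)]
  norm_num

lemma aux1 (y : ℝ) (hy : y ∈ Set.Icc (0:ℝ) 1) :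
    ∫ x in (0:ℝ)..1, (2 - 3*|y - x| - 6*x*(1-x)) = -(3*y^2 - 3*y + 1/2) := by
  have i1 : IntervalIntegrable (fun x : ℝ => 2 - 3*|y - x|) volume 0 1 := by
    apply Continuous.intervalIntegrable; fun_prop
  have i2 : IntervalIntegrable (fun x : ℝ => 6*x*(1-x)) volume 0 1 := by
    apply Continuous.intervalIntegrable; fun_prop
  have i3 : IntervalIntegrable (fun x : ℝ => |y - x|) volume 0 1 := by
    apply Continuous.intervalIntegrable; fun_prop
  rw [intervalIntegral.integral_sub i1 i2,
      intervalIntegral.integral_sub intervalIntegrable_const (i3.const_mul 3),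
      intervalIntegral.integral_const_mul, aux_abs y hy, aux_quad]
  norm_num
  ring

lemma aux2 (y : ℝ) (hy : y ∈ Set.Icc (0:ℝ) 1) :
    ∫ z in (0:ℝ)..1, (2 - 3*|z - y| - 6*y*(1-y)) = 3*y^2 - 3*y + 1/2 := by
  have i1 : IntervalIntegrable (fun z : ℝ => 2 - 3*|z - y|) volume 0 1 := by
    apply Continuous.intervalIntegrable; fun_prop
  have i3 : IntervalIntegrable (fun z : ℝ => |z - y|) volume 0 1 := by
    apply Continuous.intervalIntegrable; fun_prop
  have e : ∫ z in (0:ℝ)..1, |z - y| = y^2 - y + 1/2 := by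
    simp only [abs_sub_comm _ y]
    exact aux_abs y hy
  rw [intervalIntegral.integral_sub i1 intervalIntegrable_const,
      intervalIntegral.integral_sub intervalIntegrable_const (i3.const_mul 3),
      intervalIntegral.integral_const_mul, e]
  norm_num
  ring

lemma aux_final : ∫ y in (0:ℝ)..1, (-(3*y^2-3*y+1/2))*(3*y^2-3*y+1/2) = -(1/20) := by
  have h : ∀ y ∈ Set.uIcc (0:ℝ) 1, HasDerivAt
      (fun y : ℝ => -(9/5)*y^5 + (9/2)*y^4 - 4*y^3 + (3/2)*y^2 - (1/4)*y)
      ((-(3*y^2-3*y+1/2))*(3*y^2-3*y+1/2)) y := by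
    intro y _
    have := ((((((hasDerivAt_pow 5 y).const_mul (-(9/5):ℝ)).add
      ((hasDerivAt_pow 4 y).const_mul ((9/2):ℝ))).sub
      ((hasDerivAt_pow 3 y).const_mul (4:ℝ))).add
      ((hasDerivAt_pow 2 y).const_mul ((3/2):ℝ))).sub
      ((hasDerivAt_id y).const_mul ((1/4):ℝ)))
    refine this.congr_deriv ?_
    simp only [Nat.cast_ofNat, Nat.reduceSub]
    ring
  rw [intervalIntegral.integral_eq_sub_of_hasDerivAt h
    (by apply Continuous.intervalIntegrable; continuity)]
  norm_num

lemma icc_to_interval (f : ℝ → ℝ) :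
    ∫ x in Set.Icc (0:ℝ) 1, f x = ∫ x in (0:ℝ)..1, f x := by
  rw [MeasureTheory.integral_Icc_eq_integral_Ioc, intervalIntegral.integral_of_le zero_le_one]
/-- If `U 0, U 1, U 2` are i.i.d. uniform on `[0,1]`,
`W₁ = 2 - 3|U 1 - U 0| - 6 U 0 (1 - U 0)` and `W₂ = 2 - 3|U 2 - U 1| - 6 U 1 (1 - U 1)`,
then `E[W₁ W₂] = -1/20`. -/
theorem expectation_W1_W2
    {Ω : Type*} [MeasurableSpace Ω] (P : Measure Ω) [IsProbabilityMeasure P]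
    (U : Fin 3 → Ω → ℝ) (hmeas : ∀ i, Measurable (U i))
    (hindep : iIndepFun U P)
    (hunif : ∀ i, Measure.map (U i) P = volume.restrict (Set.Icc (0:ℝ) 1)) :
    ∫ ω, (2 - 3 * |U 1 ω - U 0 ω| - 6 * U 0 ω * (1 - U 0 ω))
        * (2 - 3 * |U 2 ω - U 1 ω| - 6 * U 1 ω * (1 - U 1 ω)) ∂P = -(1 / 20) := by
  set μ : Measure ℝ := volume.restrict (Set.Icc (0:ℝ) 1) with hμ
  haveI : IsProbabilityMeasure μ := ⟨by simp [hμ, Real.volume_Icc]⟩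
  set F : ℝ × ℝ × ℝ → ℝ := fun p =>
    (2 - 3 * |p.1 - p.2.1| - 6 * p.2.1 * (1 - p.2.1))
      * (2 - 3 * |p.2.2 - p.1| - 6 * p.1 * (1 - p.1)) with hF
  have hFc : Continuous F := by fun_prop
  have hmap02 : P.map (fun ω => (U 0 ω, U 2 ω)) = μ.prod μ := by
    rw [(indepFun_iff_map_prod_eq_prod_map_map (hmeas 0).aemeasurable
      (hmeas 2).aemeasurable).mp (hindep.indepFun (by decide)), hunif 0, hunif 2]
  have hmappair : P.map (fun ω => (U 1 ω, (U 0 ω, U 2 ω))) = μ.prod (μ.prod μ) := by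
    rw [(indepFun_iff_map_prod_eq_prod_map_map (hmeas 1).aemeasurable
      (((hmeas 0).prodMk (hmeas 2)).aemeasurable)).mp
      ((hindep.indepFun_prodMk hmeas 0 2 1 (by decide) (by decide)).symm),
      hunif 1, hmap02]
  have hstep : (∫ ω, (2 - 3 * |U 1 ω - U 0 ω| - 6 * U 0 ω * (1 - U 0 ω))
        * (2 - 3 * |U 2 ω - U 1 ω| - 6 * U 1 ω * (1 - U 1 ω)) ∂P)
      = ∫ p, F p ∂(μ.prod (μ.prod μ)) := by
    rw [← hmappair, integral_map ((hmeas 1).prodMk ((hmeas 0).prodMk (hmeas 2))).aemeasurable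
      hFc.aestronglyMeasurable]
  rw [hstep]
  have hprodeq : μ.prod (μ.prod μ) = (volume : Measure (ℝ × ℝ × ℝ)).restrict
      (Set.Icc (0:ℝ) 1 ×ˢ (Set.Icc (0:ℝ) 1 ×ˢ Set.Icc (0:ℝ) 1)) := by
    rw [hμ, Measure.prod_restrict, Measure.prod_restrict, ← Measure.volume_eq_prod,
      ← Measure.volume_eq_prod]
  have hint : Integrable F (μ.prod (μ.prod μ)) := by
    rw [hprodeq]
    exact hFc.continuousOn.integrableOn_compact
      (isCompact_Icc.prod (isCompact_Icc.prod isCompact_Icc))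
  rw [MeasureTheory.integral_prod _ hint]
  have hinner : ∀ y ∈ Set.Icc (0:ℝ) 1,
      (∫ q, F (y, q) ∂(μ.prod μ)) = (-(3*y^2-3*y+1/2))*(3*y^2-3*y+1/2) := by
    intro y hy
    have : (∫ q, F (y, q) ∂(μ.prod μ))
        = (∫ x, (2 - 3*|y - x| - 6*x*(1-x)) ∂μ) * (∫ z, (2 - 3*|z - y| - 6*y*(1-y)) ∂μ) := by
      rw [← MeasureTheory.integral_prod_mul]
    rw [this, hμ]
    rw [icc_to_interval, icc_to_interval, aux1 y hy, aux2 y hy]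
  calc ∫ y, ∫ q, F (y, q) ∂(μ.prod μ) ∂μ
      = ∫ y in Set.Icc (0:ℝ) 1, (-(3*y^2-3*y+1/2))*(3*y^2-3*y+1/2) := by
        rw [hμ]
        exact setIntegral_congr_fun measurableSet_Icc hinner
    _ = -(1/20) := by rw [icc_to_interval]; exact aux_final
end

section
/- Let U_1, U_2 be i.i.d. uniform random variables on [0,1] and W_1 = 2 - 3|U_2 - U_1| - 6 U_1(1 - U_1). Then E[W_1^4] = 3/5. -/
open MeasureTheory ProbabilityTheory Set

noncomputable def f2 : ℝ × ℝ → ℝ := fun p => (2 - 3 * |p.2 - p.1| - 6 * p.1 * (1 - p.1)) ^ 4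

lemma f2_cont : Continuous f2 := by unfold f2; fun_prop

lemma inner_eq (x : ℝ) (hx : x ∈ Icc (0:ℝ) 1) :
    ∫ y in (0:ℝ)..1, (2 - 3 * |y - x| - 6 * x * (1 - x)) ^ 4
      = 11/5 - 15*x - 12*x^2 + 594*x^3 - 2943*x^4 + 6804*x^5 - 8316*x^6 + 5184*x^7 - 1296*x^8 := by
  obtain ⟨hx0, hx1⟩ := hx
  have hc : Continuous fun y : ℝ => (2 - 3 * |y - x| - 6 * x * (1 - x)) ^ 4 := by fun_prop
  rw [← intervalIntegral.integral_add_adjacent_intervals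
    (hc.intervalIntegrable 0 x) (hc.intervalIntegrable x 1)]
  have e1 : ∫ y in (0:ℝ)..x, (2 - 3 * |y - x| - 6 * x * (1 - x)) ^ 4
      = ∫ y in (0:ℝ)..x, (2 - 3 * (x - y) - 6 * x * (1 - x)) ^ 4 := by
    apply intervalIntegral.integral_congr
    intro y hy
    rw [uIcc_of_le hx0] at hy
    have h2 : y ≤ x := hy.2
    show (2 - 3 * |y - x| - 6 * x * (1 - x)) ^ 4 = _
    rw [abs_of_nonpos (by linarith)]
    ring_nf
  have e2 : ∫ y in x..(1:ℝ), (2 - 3 * |y - x| - 6 * x * (1 - x)) ^ 4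
      = ∫ y in x..(1:ℝ), (2 - 3 * (y - x) - 6 * x * (1 - x)) ^ 4 := by
    apply intervalIntegral.integral_congr
    intro y hy
    rw [uIcc_of_le hx1] at hy
    have h2 : x ≤ y := hy.1
    show (2 - 3 * |y - x| - 6 * x * (1 - x)) ^ 4 = _
    rw [abs_of_nonneg (by linarith)]
  have hd1 : ∀ y ∈ uIcc (0:ℝ) x, HasDerivAt
      (fun y : ℝ => (2 - 3 * (x - y) - 6 * x * (1 - x)) ^ 5 / 15)
      ((2 - 3 * (x - y) - 6 * x * (1 - x)) ^ 4) y := by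
    intro y _
    have hb : HasDerivAt (fun y : ℝ => 2 - 3 * (x - y) - 6 * x * (1 - x)) 3 y := by
      have h := ((((hasDerivAt_id y).const_sub x).const_mul 3).const_sub 2).sub_const
        (6 * x * (1 - x))
      exact h.congr_deriv (by norm_num)
    have h := (hb.pow 5).div_const 15
    exact h.congr_deriv (by norm_num; ring)
  have hd2 : ∀ y ∈ uIcc x (1:ℝ), HasDerivAt
      (fun y : ℝ => -(2 - 3 * (y - x) - 6 * x * (1 - x)) ^ 5 / 15)
      ((2 - 3 * (y - x) - 6 * x * (1 - x)) ^ 4) y := by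
    intro y _
    have hb : HasDerivAt (fun y : ℝ => 2 - 3 * (y - x) - 6 * x * (1 - x)) (-3) y := by
      have h := ((((hasDerivAt_id y).sub_const x).const_mul 3).const_sub 2).sub_const
        (6 * x * (1 - x))
      exact h.congr_deriv (by norm_num)
    have h := ((hb.pow 5).neg).div_const 15
    exact h.congr_deriv (by norm_num; ring)
  have hc1 : Continuous fun y : ℝ => (2 - 3 * (x - y) - 6 * x * (1 - x)) ^ 4 := by fun_prop
  have hc2 : Continuous fun y : ℝ => (2 - 3 * (y - x) - 6 * x * (1 - x)) ^ 4 := by fun_prop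
  rw [e1, e2,
    intervalIntegral.integral_eq_sub_of_hasDerivAt hd1 (hc1.intervalIntegrable 0 x),
    intervalIntegral.integral_eq_sub_of_hasDerivAt hd2 (hc2.intervalIntegrable x 1)]
  ring

lemma outer_eq :
    ∫ x in (0:ℝ)..1, (11/5 - 15*x - 12*x^2 + 594*x^3 - 2943*x^4 + 6804*x^5 - 8316*x^6
      + 5184*x^7 - 1296*x^8) = 3/5 := by
  have H : ∀ x ∈ uIcc (0:ℝ) 1, HasDerivAt
      (fun x : ℝ => 11/5*x - 15/2*x^2 - 4*x^3 + 297/2*x^4 - 2943/5*x^5 + 1134*x^6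
        - 1188*x^7 + 648*x^8 - 144*x^9)
      (11/5 - 15*x - 12*x^2 + 594*x^3 - 2943*x^4 + 6804*x^5 - 8316*x^6 + 5184*x^7 - 1296*x^8)
      x := by
    intro x _
    have h := (((((((((hasDerivAt_pow 1 x).const_mul ((11:ℝ)/5)).sub
      ((hasDerivAt_pow 2 x).const_mul ((15:ℝ)/2))).sub
      ((hasDerivAt_pow 3 x).const_mul (4:ℝ))).add
      ((hasDerivAt_pow 4 x).const_mul ((297:ℝ)/2))).sub
      ((hasDerivAt_pow 5 x).const_mul ((2943:ℝ)/5))).add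
      ((hasDerivAt_pow 6 x).const_mul (1134:ℝ))).sub
      ((hasDerivAt_pow 7 x).const_mul (1188:ℝ))).add
      ((hasDerivAt_pow 8 x).const_mul (648:ℝ))).sub
      ((hasDerivAt_pow 9 x).const_mul (144:ℝ))
    simp only [pow_one] at h
    exact h.congr_deriv (by norm_num; ring)
  rw [intervalIntegral.integral_eq_sub_of_hasDerivAt H
    ((by fun_prop : Continuous fun x : ℝ => 11/5 - 15*x - 12*x^2 + 594*x^3 - 2943*x^4
      + 6804*x^5 - 8316*x^6 + 5184*x^7 - 1296*x^8).intervalIntegrable 0 1)]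
  norm_num

open MeasureTheory ProbabilityTheory

/-- If `U 0, U 1` are i.i.d. uniform on `[0,1]` and
`W₁ = 2 - 3|U 1 - U 0| - 6 U 0 (1 - U 0)`, then `E[W₁⁴] = 3/5`. -/
theorem expectation_W_pow_four
    {Ω : Type*} [MeasurableSpace Ω] (P : Measure Ω) [IsProbabilityMeasure P]
    (U : Fin 2 → Ω → ℝ) (hmeas : ∀ i, Measurable (U i))
    (hindep : iIndepFun U P)
    (hunif : ∀ i, Measure.map (U i) P = volume.restrict (Set.Icc (0:ℝ) 1)) :
    ∫ ω, (2 - 3 * |U 1 ω - U 0 ω| - 6 * U 0 ω * (1 - U 0 ω)) ^ 4 ∂P = 3 / 5 := by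
  set μ : Measure ℝ := volume.restrict (Set.Icc (0:ℝ) 1) with hμ
  have hpair : Measurable fun ω => (U 0 ω, U 1 ω) := (hmeas 0).prodMk (hmeas 1)
  have hmap : Measure.map (fun ω => (U 0 ω, U 1 ω)) P = μ.prod μ := by
    rw [show μ.prod μ = (Measure.map (U 0) P).prod (Measure.map (U 1) P) by
      rw [hunif 0, hunif 1]]
    exact (indepFun_iff_map_prod_eq_prod_map_map (hmeas 0).aemeasurable
      (hmeas 1).aemeasurable).mp (hindep.indepFun (by decide))
  have hint : Integrable f2 (μ.prod μ) := by
    rw [hμ, Measure.prod_restrict, ← Measure.volume_eq_prod]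
    exact f2_cont.continuousOn.integrableOn_compact (isCompact_Icc.prod isCompact_Icc)
  have key : ∫ ω, (2 - 3 * |U 1 ω - U 0 ω| - 6 * U 0 ω * (1 - U 0 ω)) ^ 4 ∂P
      = ∫ p, f2 p ∂(μ.prod μ) := by
    rw [← hmap, integral_map hpair.aemeasurable f2_cont.aestronglyMeasurable]
    rfl
  rw [key, integral_prod _ hint]
  have inner : ∀ x ∈ Set.Icc (0:ℝ) 1, (∫ y, f2 (x, y) ∂μ)
      = 11/5 - 15*x - 12*x^2 + 594*x^3 - 2943*x^4 + 6804*x^5 - 8316*x^6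
        + 5184*x^7 - 1296*x^8 := by
    intro x hx
    rw [hμ, MeasureTheory.integral_Icc_eq_integral_Ioc,
      ← intervalIntegral.integral_of_le (by norm_num : (0:ℝ) ≤ 1)]
    exact inner_eq x hx
  rw [hμ, show (∫ x, (∫ y, f2 (x, y) ∂μ) ∂(volume.restrict (Set.Icc (0:ℝ) 1)))
      = ∫ x in Set.Icc (0:ℝ) 1, (11/5 - 15*x - 12*x^2 + 594*x^3 - 2943*x^4 + 6804*x^5
        - 8316*x^6 + 5184*x^7 - 1296*x^8)
    from setIntegral_congr_fun measurableSet_Icc inner]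
  rw [MeasureTheory.integral_Icc_eq_integral_Ioc,
    ← intervalIntegral.integral_of_le (by norm_num : (0:ℝ) ≤ 1)]
  exact outer_eq
end

section
/- Let U_1, U_2, U_3 be i.i.d. uniform on [0,1], W_1 = 2 - 3|U_2 - U_1| - 6 U_1(1 - U_1), W_2 = 2 - 3|U_3 - U_2| - 6 U_2(1 - U_2). Then E[W_1^2 W_2^2] = 23/70. -/
open MeasureTheory ProbabilityTheory

private lemma int_poly (a b c0 c1 c2 c3 c4 c5 c6 : ℝ) :
    ∫ x in a..b, (c0 + c1*x + c2*x^2 + c3*x^3 + c4*x^4 + c5*x^5 + c6*x^6) =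
      (c0*b + c1/2*b^2 + c2/3*b^3 + c3/4*b^4 + c4/5*b^5 + c5/6*b^6 + c6/7*b^7)
      - (c0*a + c1/2*a^2 + c2/3*a^3 + c3/4*a^4 + c4/5*a^5 + c5/6*a^6 + c6/7*a^7) := by
  have h : ∀ x : ℝ, HasDerivAt
      (fun x : ℝ => c0 * x^1 + (c1/2) * x^2 + (c2/3) * x^3 + (c3/4) * x^4 + (c4/5) * x^5
        + (c5/6) * x^6 + (c6/7) * x^7)
      (c0 + c1*x + c2*x^2 + c3*x^3 + c4*x^4 + c5*x^5 + c6*x^6) x := by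
    intro x
    have H := (((((((hasDerivAt_pow 1 x).const_mul c0).add
      ((hasDerivAt_pow 2 x).const_mul (c1/2))).add
      ((hasDerivAt_pow 3 x).const_mul (c2/3))).add
      ((hasDerivAt_pow 4 x).const_mul (c3/4))).add
      ((hasDerivAt_pow 5 x).const_mul (c4/5))).add
      ((hasDerivAt_pow 6 x).const_mul (c5/6))).add
      ((hasDerivAt_pow 7 x).const_mul (c6/7))
    exact H.congr_deriv (by push_cast; ring)
  rw [intervalIntegral.integral_eq_sub_of_hasDerivAt (fun x _ => h x)
    ((by fun_prop : Continuous fun x : ℝ =>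
      c0 + c1*x + c2*x^2 + c3*x^3 + c4*x^4 + c5*x^5 + c6*x^6).intervalIntegrable a b)]
  ring

private lemma lemA {y : ℝ} (h0 : 0 ≤ y) (h1 : y ≤ 1) :
    ∫ x in Set.Icc (0:ℝ) 1, (2 - 3 * |y - x| - 6 * x * (1 - x)) ^ 2 =
      6/5 - 3*y - 3*y^2 + 12*y^3 - 6*y^4 := by
  have hc : Continuous fun x : ℝ => (2 - 3 * |y - x| - 6 * x * (1 - x)) ^ 2 := by
    fun_prop
  rw [MeasureTheory.integral_Icc_eq_integral_Ioc,
    ← intervalIntegral.integral_of_le (zero_le_one' ℝ),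
    ← intervalIntegral.integral_add_adjacent_intervals (a := 0) (b := y) (c := 1)
      (hc.intervalIntegrable 0 y) (hc.intervalIntegrable y 1)]
  have e1 : ∫ x in (0:ℝ)..y, (2 - 3 * |y - x| - 6 * x * (1 - x)) ^ 2
      = ∫ x in (0:ℝ)..y, ((2-3*y)^2 + (6*(3*y-2))*x + (12*(2-3*y)+9)*x^2
        + (-36)*x^3 + 36*x^4 + 0*x^5 + 0*x^6) := by
    apply intervalIntegral.integral_congr
    intro x hx
    rw [Set.uIcc_of_le h0] at hx
    simp only [abs_of_nonneg (by linarith [hx.2] : (0:ℝ) ≤ y - x)]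
    ring
  have e2 : ∫ x in y..(1:ℝ), (2 - 3 * |y - x| - 6 * x * (1 - x)) ^ 2
      = ∫ x in y..(1:ℝ), ((2+3*y)^2 + (-(18*(2+3*y)))*x + (12*(2+3*y)+81)*x^2
        + (-108)*x^3 + 36*x^4 + 0*x^5 + 0*x^6) := by
    apply intervalIntegral.integral_congr
    intro x hx
    rw [Set.uIcc_of_le h1] at hx
    simp only [abs_of_nonpos (by linarith [hx.1] : y - x ≤ 0)]
    ring
  rw [e1, e2, int_poly, int_poly]
  ring

private lemma lemB {y : ℝ} (h0 : 0 ≤ y) (h1 : y ≤ 1) :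
    ∫ z in Set.Icc (0:ℝ) 1, (2 - 3 * |z - y| - 6 * y * (1 - y)) ^ 2 =
      1 - 3*y + 3*y^2 := by
  have hc : Continuous fun z : ℝ => (2 - 3 * |z - y| - 6 * y * (1 - y)) ^ 2 := by
    fun_prop
  rw [MeasureTheory.integral_Icc_eq_integral_Ioc,
    ← intervalIntegral.integral_of_le (zero_le_one' ℝ),
    ← intervalIntegral.integral_add_adjacent_intervals (a := 0) (b := y) (c := 1)
      (hc.intervalIntegrable 0 y) (hc.intervalIntegrable y 1)]
  have e1 : ∫ z in (0:ℝ)..y, (2 - 3 * |z - y| - 6 * y * (1 - y)) ^ 2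
      = ∫ z in (0:ℝ)..y, ((2-9*y+6*y^2)^2 + (6*(2-9*y+6*y^2))*z + 9*z^2
        + 0*z^3 + 0*z^4 + 0*z^5 + 0*z^6) := by
    apply intervalIntegral.integral_congr
    intro z hz
    rw [Set.uIcc_of_le h0] at hz
    simp only [abs_of_nonpos (by linarith [hz.2] : z - y ≤ 0)]
    ring
  have e2 : ∫ z in y..(1:ℝ), (2 - 3 * |z - y| - 6 * y * (1 - y)) ^ 2
      = ∫ z in y..(1:ℝ), ((2-3*y+6*y^2)^2 + (-(6*(2-3*y+6*y^2)))*z + 9*z^2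
        + 0*z^3 + 0*z^4 + 0*z^5 + 0*z^6) := by
    apply intervalIntegral.integral_congr
    intro z hz
    rw [Set.uIcc_of_le h1] at hz
    simp only [abs_of_nonneg (by linarith [hz.1] : (0:ℝ) ≤ z - y)]
    ring
  rw [e1, e2, int_poly, int_poly]
  ring

/-- If `U 0, U 1, U 2` are i.i.d. uniform on `[0,1]`,
`W₁ = 2 - 3|U 1 - U 0| - 6 U 0 (1 - U 0)` and `W₂ = 2 - 3|U 2 - U 1| - 6 U 1 (1 - U 1)`,
then `E[W₁² W₂²] = 23/70`. -/
theorem expectation_W1sq_W2sq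
    {Ω : Type*} [MeasurableSpace Ω] (P : Measure Ω) [IsProbabilityMeasure P]
    (U : Fin 3 → Ω → ℝ) (hmeas : ∀ i, Measurable (U i))
    (hindep : iIndepFun U P)
    (hunif : ∀ i, Measure.map (U i) P = volume.restrict (Set.Icc (0:ℝ) 1)) :
    ∫ ω, (2 - 3 * |U 1 ω - U 0 ω| - 6 * U 0 ω * (1 - U 0 ω)) ^ 2
        * (2 - 3 * |U 2 ω - U 1 ω| - 6 * U 1 ω * (1 - U 1 ω)) ^ 2 ∂P = 23 / 70 := by
  set μ : Measure ℝ := volume.restrict (Set.Icc (0:ℝ) 1) with hμ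
  haveI : IsProbabilityMeasure μ :=
    ⟨by rw [hμ, Measure.restrict_apply_univ, Real.volume_Icc]; norm_num⟩
  set G : ℝ × ℝ × ℝ → ℝ := fun p =>
    (2 - 3 * |p.1 - p.2.1| - 6 * p.2.1 * (1 - p.2.1)) ^ 2
      * (2 - 3 * |p.2.2 - p.1| - 6 * p.1 * (1 - p.1)) ^ 2 with hG
  have hGm : Measurable G := by
    have m1 : Measurable fun p : ℝ × ℝ × ℝ => p.1 := measurable_fst
    have m2 : Measurable fun p : ℝ × ℝ × ℝ => p.2.1 := measurable_snd.fst
    have m3 : Measurable fun p : ℝ × ℝ × ℝ => p.2.2 := measurable_snd.snd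
    exact (((measurable_const.sub (((m1.sub m2).abs).const_mul 3)).sub
        ((m2.const_mul 6).mul (measurable_const.sub m2))).pow_const 2).mul
      (((measurable_const.sub (((m3.sub m1).abs).const_mul 3)).sub
        ((m1.const_mul 6).mul (measurable_const.sub m1))).pow_const 2)
  set φ : Ω → ℝ × ℝ × ℝ := fun ω => (U 1 ω, (U 0 ω, U 2 ω)) with hφdef
  have hφ : AEMeasurable φ P :=
    ((hmeas 1).prodMk ((hmeas 0).prodMk (hmeas 2))).aemeasurable
  have h02map : P.map (fun ω => (U 0 ω, U 2 ω)) = μ.prod μ := by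
    rw [(indepFun_iff_map_prod_eq_prod_map_map (hmeas 0).aemeasurable
      (hmeas 2).aemeasurable).mp (hindep.indepFun (by decide)), hunif 0, hunif 2]
  have h1p : IndepFun (U 1) (fun ω => (U 0 ω, U 2 ω)) P :=
    (hindep.indepFun_prodMk hmeas 0 2 1 (by decide) (by decide)).symm
  have hmap : P.map φ = μ.prod (μ.prod μ) := by
    rw [(indepFun_iff_map_prod_eq_prod_map_map (hmeas 1).aemeasurable
      ((hmeas 0).prodMk (hmeas 2)).aemeasurable).mp h1p, hunif 1, h02map]
  have key : ∫ p, G p ∂(μ.prod (μ.prod μ)) =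
      ∫ ω, (2 - 3 * |U 1 ω - U 0 ω| - 6 * U 0 ω * (1 - U 0 ω)) ^ 2
        * (2 - 3 * |U 2 ω - U 1 ω| - 6 * U 1 ω * (1 - U 1 ω)) ^ 2 ∂P := by
    rw [← hmap, integral_map hφ hGm.aestronglyMeasurable]
  rw [← key]
  -- integrability
  have hmem : ∀ᵐ p ∂(μ.prod (μ.prod μ)),
      p ∈ (Set.Icc (0:ℝ) 1) ×ˢ ((Set.Icc (0:ℝ) 1) ×ˢ (Set.Icc (0:ℝ) 1)) := by
    rw [hμ, Measure.prod_restrict, Measure.prod_restrict]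
    exact ae_restrict_mem (measurableSet_Icc.prod (measurableSet_Icc.prod measurableSet_Icc))
  have hbound : ∀ p : ℝ × ℝ × ℝ,
      p ∈ (Set.Icc (0:ℝ) 1) ×ˢ ((Set.Icc (0:ℝ) 1) ×ˢ (Set.Icc (0:ℝ) 1)) →
      ‖G p‖ ≤ 14641 := by
    rintro ⟨y, x, z⟩ ⟨⟨hy0, hy1⟩, ⟨hx0, hx1⟩, ⟨hz0, hz1⟩⟩
    dsimp only at hy0 hy1 hx0 hx1 hz0 hz1
    simp only [hG, Real.norm_eq_abs]
    rw [abs_of_nonneg (mul_nonneg (sq_nonneg _) (sq_nonneg _))]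
    have hxy : |y - x| ≤ 1 := abs_le.mpr ⟨by linarith, by linarith⟩
    have hxy0 : 0 ≤ |y - x| := abs_nonneg _
    have hzy : |z - y| ≤ 1 := abs_le.mpr ⟨by linarith, by linarith⟩
    have hzy0 : 0 ≤ |z - y| := abs_nonneg _
    have hxx0 : 0 ≤ x * (1 - x) := mul_nonneg hx0 (by linarith)
    have hxx1 : x * (1 - x) ≤ 1 := by nlinarith
    have hyy0 : 0 ≤ y * (1 - y) := mul_nonneg hy0 (by linarith)
    have hyy1 : y * (1 - y) ≤ 1 := by nlinarith
    have b1 : (2 - 3 * |y - x| - 6 * x * (1 - x)) ^ 2 ≤ 121 := by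
      nlinarith [mul_nonneg (by nlinarith : (0:ℝ) ≤ 2 - (2 - 3 * |y - x| - 6 * x * (1 - x)))
        (by nlinarith : (0:ℝ) ≤ (2 - 3 * |y - x| - 6 * x * (1 - x)) + 7)]
    have b2 : (2 - 3 * |z - y| - 6 * y * (1 - y)) ^ 2 ≤ 121 := by
      nlinarith [mul_nonneg (by nlinarith : (0:ℝ) ≤ 2 - (2 - 3 * |z - y| - 6 * y * (1 - y)))
        (by nlinarith : (0:ℝ) ≤ (2 - 3 * |z - y| - 6 * y * (1 - y)) + 7)]
    exact le_trans (mul_le_mul b1 b2 (sq_nonneg _) (by norm_num)) (by norm_num)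
  have hInt : Integrable G (μ.prod (μ.prod μ)) :=
    Integrable.mono' (integrable_const 14641) hGm.aestronglyMeasurable
      (hmem.mono fun p hp => hbound p hp)
  rw [MeasureTheory.integral_prod _ hInt]
  have hcongr : ∀ᵐ y ∂μ, (∫ q, G (y, q) ∂(μ.prod μ)) =
      (6/5 - 3*y - 3*y^2 + 12*y^3 - 6*y^4) * (1 - 3*y + 3*y^2) := by
    have hy_mem : ∀ᵐ y ∂μ, y ∈ Set.Icc (0:ℝ) 1 := ae_restrict_mem measurableSet_Icc
    filter_upwards [hy_mem, hInt.prod_right_ae] with y hy hyint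
    rw [MeasureTheory.integral_prod _ hyint]
    simp only [hG]
    have inner : ∀ x : ℝ, (∫ z, (2 - 3 * |(y, x, z).1 - (y, x, z).2.1|
        - 6 * (y, x, z).2.1 * (1 - (y, x, z).2.1)) ^ 2
        * (2 - 3 * |(y, x, z).2.2 - (y, x, z).1|
        - 6 * (y, x, z).1 * (1 - (y, x, z).1)) ^ 2 ∂μ)
        = (2 - 3 * |y - x| - 6 * x * (1 - x)) ^ 2 * (1 - 3*y + 3*y^2) := by
      intro x
      simp only
      rw [MeasureTheory.integral_const_mul, lemB hy.1 hy.2]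
    simp_rw [inner]
    rw [MeasureTheory.integral_mul_const, lemA hy.1 hy.2]
  rw [MeasureTheory.integral_congr_ae hcongr]
  rw [hμ, MeasureTheory.integral_Icc_eq_integral_Ioc,
    ← intervalIntegral.integral_of_le (zero_le_one' ℝ)]
  have e : ∫ y in (0:ℝ)..1, (6/5 - 3*y - 3*y^2 + 12*y^3 - 6*y^4) * (1 - 3*y + 3*y^2)
      = ∫ y in (0:ℝ)..1, (6/5 + (-33/5)*y + (48/5)*y^2 + 12*y^3 + (-51)*y^4
        + 54*y^5 + (-18)*y^6) := by
    apply intervalIntegral.integral_congr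
    intro y _
    ring
  rw [e, int_poly]
  norm_num
end

section
/- Let U_1, U_2, U_3 be i.i.d. uniform on [0,1], W_1 = 2 - 3|U_2 - U_1| - 6 U_1(1 - U_1), W_2 = 2 - 3|U_3 - U_2| - 6 U_2(1 - U_2). Then E[W_1 W_2 (W_1^2 + W_2^2)] = -3/28. -/
open MeasureTheory ProbabilityTheory intervalIntegral

set_option linter.unreachableTactic false
set_option linter.unusedTactic false


/-- derivative helper for degree ≤ 7 polynomials -/
lemma hasDerivAt_poly7 (a1 a2 a3 a4 a5 a6 a7 : ℝ) (x : ℝ) :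
    HasDerivAt (fun x : ℝ => a1*x + a2*x^2 + a3*x^3 + a4*x^4 + a5*x^5 + a6*x^6 + a7*x^7)
      (a1 + 2*a2*x + 3*a3*x^2 + 4*a4*x^3 + 5*a5*x^4 + 6*a6*x^5 + 7*a7*x^6) x := by
  have h : ∀ n : ℕ, ∀ c : ℝ, HasDerivAt (fun x : ℝ => c * x ^ n) (c * (n * x ^ (n-1))) x :=
    fun n c => (hasDerivAt_pow n x).const_mul c
  have h1 := (h 1 a1).add (h 2 a2)
  have h2 := h1.add (h 3 a3)
  have h3 := h2.add (h 4 a4)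
  have h4 := h3.add (h 5 a5)
  have h5 := h4.add (h 6 a6)
  have H := h5.add (h 7 a7)
  convert H using 2 <;> first
    | (ext y; push_cast; ring)
    | (simp only [Pi.add_apply]; ring)
    | (push_cast; ring)
    | rfl

lemma intpoly1 (c d e a b : ℝ) :
    ∫ x in a..b, (c + d*x + e*x^2) =
      (c*b + d/2*b^2 + e/3*b^3) - (c*a + d/2*a^2 + e/3*a^3) := by
  have key : ∀ x : ℝ, HasDerivAt (fun x : ℝ => c*x + d/2*x^2 + e/3*x^3 + 0*x^4 + 0*x^5 + 0*x^6 + 0*x^7)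
      (c + d*x + e*x^2) x := by
    intro x
    have := hasDerivAt_poly7 c (d/2) (e/3) 0 0 0 0 x
    convert this using 1; ring
  rw [integral_eq_sub_of_hasDerivAt (fun x _ => key x) (by apply Continuous.intervalIntegrable; continuity)]
  ring

lemma intpoly3 (c d e a b : ℝ) :
    ∫ x in a..b, (c + d*x + e*x^2)^3 =
      (c^3*b + (3*c^2*d)/2*b^2 + (c*d^2+c^2*e)*b^3 + (d^3+6*c*d*e)/4*b^4
        + (3*d^2*e+3*c*e^2)/5*b^5 + (d*e^2)/2*b^6 + e^3/7*b^7)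
      - (c^3*a + (3*c^2*d)/2*a^2 + (c*d^2+c^2*e)*a^3 + (d^3+6*c*d*e)/4*a^4
        + (3*d^2*e+3*c*e^2)/5*a^5 + (d*e^2)/2*a^6 + e^3/7*a^7) := by
  have key : ∀ x : ℝ, HasDerivAt (fun x : ℝ => c^3*x + (3*c^2*d)/2*x^2 + (c*d^2+c^2*e)*x^3
      + (d^3+6*c*d*e)/4*x^4 + (3*d^2*e+3*c*e^2)/5*x^5 + (d*e^2)/2*x^6 + e^3/7*x^7)
      ((c + d*x + e*x^2)^3) x := by
    intro x
    have := hasDerivAt_poly7 (c^3) ((3*c^2*d)/2) (c*d^2+c^2*e) ((d^3+6*c*d*e)/4)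
      ((3*d^2*e+3*c*e^2)/5) ((d*e^2)/2) (e^3/7) x
    convert this using 1; ring
  rw [integral_eq_sub_of_hasDerivAt (fun x _ => key x) (by apply Continuous.intervalIntegrable; continuity)]

lemma A1_eq (y : ℝ) (h0 : 0 ≤ y) (h1 : y ≤ 1) :
    (∫ x in (0:ℝ)..1, (2 - 3*|y - x| - 6*x*(1-x))) = -1/2 + 3*y - 3*y^2 := by
  have hc : Continuous fun x : ℝ => 2 - 3*|y - x| - 6*x*(1-x) := by fun_prop
  rw [← integral_add_adjacent_intervals (a := 0) (b := y) (c := 1)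
    (hc.intervalIntegrable _ _) (hc.intervalIntegrable _ _)]
  have e1 : Set.EqOn (fun x : ℝ => 2 - 3*|y - x| - 6*x*(1-x))
      (fun x : ℝ => (2-3*y) + (-3)*x + 6*x^2) (Set.uIcc 0 y) := by
    intro x hx
    rw [Set.uIcc_of_le h0] at hx
    simp only
    rw [abs_of_nonneg (by linarith [hx.2] : (0:ℝ) ≤ y - x)]; ring
  have e2 : Set.EqOn (fun x : ℝ => 2 - 3*|y - x| - 6*x*(1-x))
      (fun x : ℝ => (2+3*y) + (-9)*x + 6*x^2) (Set.uIcc y 1) := by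
    intro x hx
    rw [Set.uIcc_of_le h1] at hx
    simp only
    rw [abs_of_nonpos (by linarith [hx.1] : y - x ≤ 0)]; ring
  rw [integral_congr e1, integral_congr e2, intpoly1, intpoly1]; ring

lemma A3_eq (y : ℝ) (h0 : 0 ≤ y) (h1 : y ≤ 1) :
    (∫ x in (0:ℝ)..1, (2 - 3*|y - x| - 6*x*(1-x))^3)
      = -83/140 + 54/5*y - 99/2*y^2 + 99*y^3 - 207/2*y^4 + 324/5*y^5 - 108/5*y^6 := by
  have hc : Continuous fun x : ℝ => (2 - 3*|y - x| - 6*x*(1-x))^3 := by fun_prop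
  rw [← integral_add_adjacent_intervals (a := 0) (b := y) (c := 1)
    (hc.intervalIntegrable _ _) (hc.intervalIntegrable _ _)]
  have e1 : Set.EqOn (fun x : ℝ => (2 - 3*|y - x| - 6*x*(1-x))^3)
      (fun x : ℝ => ((2-3*y) + (-3)*x + 6*x^2)^3) (Set.uIcc 0 y) := by
    intro x hx
    rw [Set.uIcc_of_le h0] at hx
    simp only
    rw [abs_of_nonneg (by linarith [hx.2] : (0:ℝ) ≤ y - x)]; ring
  have e2 : Set.EqOn (fun x : ℝ => (2 - 3*|y - x| - 6*x*(1-x))^3)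
      (fun x : ℝ => ((2+3*y) + (-9)*x + 6*x^2)^3) (Set.uIcc y 1) := by
    intro x hx
    rw [Set.uIcc_of_le h1] at hx
    simp only
    rw [abs_of_nonpos (by linarith [hx.1] : y - x ≤ 0)]; ring
  rw [integral_congr e1, integral_congr e2, intpoly3, intpoly3]; ring

lemma B1_eq (y : ℝ) (h0 : 0 ≤ y) (h1 : y ≤ 1) :
    (∫ z in (0:ℝ)..1, (2 - 3*|z - y| - 6*y*(1-y))) = 1/2 - 3*y + 3*y^2 := by
  have hc : Continuous fun z : ℝ => 2 - 3*|z - y| - 6*y*(1-y) := by fun_prop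
  rw [← integral_add_adjacent_intervals (a := 0) (b := y) (c := 1)
    (hc.intervalIntegrable _ _) (hc.intervalIntegrable _ _)]
  have e1 : Set.EqOn (fun z : ℝ => 2 - 3*|z - y| - 6*y*(1-y))
      (fun z : ℝ => (2-9*y+6*y^2) + 3*z + 0*z^2) (Set.uIcc 0 y) := by
    intro z hz
    rw [Set.uIcc_of_le h0] at hz
    simp only
    rw [abs_of_nonpos (by linarith [hz.2] : z - y ≤ 0)]; ring
  have e2 : Set.EqOn (fun z : ℝ => 2 - 3*|z - y| - 6*y*(1-y))
      (fun z : ℝ => (2-3*y+6*y^2) + (-3)*z + 0*z^2) (Set.uIcc y 1) := by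
    intro z hz
    rw [Set.uIcc_of_le h1] at hz
    simp only
    rw [abs_of_nonneg (by linarith [hz.1] : (0:ℝ) ≤ z - y)]; ring
  rw [integral_congr e1, integral_congr e2, intpoly1, intpoly1]; ring

lemma B3_eq (y : ℝ) (h0 : 0 ≤ y) (h1 : y ≤ 1) :
    (∫ z in (0:ℝ)..1, (2 - 3*|z - y| - 6*y*(1-y))^3)
      = 5/4 - 9*y - 9/2*y^2 + 135*y^3 - 675/2*y^4 + 324*y^5 - 108*y^6 := by
  have hc : Continuous fun z : ℝ => (2 - 3*|z - y| - 6*y*(1-y))^3 := by fun_prop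
  rw [← integral_add_adjacent_intervals (a := 0) (b := y) (c := 1)
    (hc.intervalIntegrable _ _) (hc.intervalIntegrable _ _)]
  have e1 : Set.EqOn (fun z : ℝ => (2 - 3*|z - y| - 6*y*(1-y))^3)
      (fun z : ℝ => ((2-9*y+6*y^2) + 3*z + 0*z^2)^3) (Set.uIcc 0 y) := by
    intro z hz
    rw [Set.uIcc_of_le h0] at hz
    simp only
    rw [abs_of_nonpos (by linarith [hz.2] : z - y ≤ 0)]; ring
  have e2 : Set.EqOn (fun z : ℝ => (2 - 3*|z - y| - 6*y*(1-y))^3)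
      (fun z : ℝ => ((2-3*y+6*y^2) + (-3)*z + 0*z^2)^3) (Set.uIcc y 1) := by
    intro z hz
    rw [Set.uIcc_of_le h1] at hz
    simp only
    rw [abs_of_nonneg (by linarith [hz.1] : (0:ℝ) ≤ z - y)]; ring
  rw [integral_congr e1, integral_congr e2, intpoly3, intpoly3]; ring


lemma hasDerivAt_poly9 (a1 a2 a3 a4 a5 a6 a7 a8 a9 : ℝ) (x : ℝ) :
    HasDerivAt (fun x : ℝ => a1*x + a2*x^2 + a3*x^3 + a4*x^4 + a5*x^5 + a6*x^6 + a7*x^7 + a8*x^8 + a9*x^9)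
      (a1 + 2*a2*x + 3*a3*x^2 + 4*a4*x^3 + 5*a5*x^4 + 6*a6*x^5 + 7*a7*x^6 + 8*a8*x^7 + 9*a9*x^8) x := by
  have h : ∀ n : ℕ, ∀ c : ℝ, HasDerivAt (fun x : ℝ => c * x ^ n) (c * (n * x ^ (n-1))) x :=
    fun n c => (hasDerivAt_pow n x).const_mul c
  have h1 := (h 1 a1).add (h 2 a2)
  have h2 := h1.add (h 3 a3)
  have h3 := h2.add (h 4 a4)
  have h4 := h3.add (h 5 a5)
  have h5 := h4.add (h 6 a6)
  have h6 := h5.add (h 7 a7)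
  have h7 := h6.add (h 8 a8)
  have H := h7.add (h 9 a9)
  convert H using 2 <;> first
    | (ext y; push_cast; ring)
    | (simp only [Pi.add_apply]; ring)
    | (push_cast; ring)
    | rfl

lemma final_poly_integral :
    (∫ y in (0:ℝ)..1,
      ((-83/140 + 54/5*y - 99/2*y^2 + 99*y^3 - 207/2*y^4 + 324/5*y^5 - 108/5*y^6) * (1/2 - 3*y + 3*y^2)
        + (-1/2 + 3*y - 3*y^2) * (5/4 - 9*y - 9/2*y^2 + 135*y^3 - 675/2*y^4 + 324*y^5 - 108*y^6)))
      = -(3/28) := by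
  have key : ∀ y : ℝ, HasDerivAt (fun y : ℝ => (-129/140)*y + (54/7)*y^2 + (-204/7)*y^3 + (441/10)*y^4
      + 18*y^5 + (-783/5)*y^6 + (7614/35)*y^7 + (-648/5)*y^8 + (144/5)*y^9)
      ((-83/140 + 54/5*y - 99/2*y^2 + 99*y^3 - 207/2*y^4 + 324/5*y^5 - 108/5*y^6) * (1/2 - 3*y + 3*y^2)
        + (-1/2 + 3*y - 3*y^2) * (5/4 - 9*y - 9/2*y^2 + 135*y^3 - 675/2*y^4 + 324*y^5 - 108*y^6)) y := by
    intro y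
    have := hasDerivAt_poly9 (-129/140) (54/7) (-204/7) (441/10) 18 (-783/5) (7614/35) (-648/5) (144/5) y
    convert this using 1; ring
  rw [integral_eq_sub_of_hasDerivAt (fun y _ => key y)
    (by apply Continuous.intervalIntegrable; fun_prop)]
  norm_num

noncomputable def FF : ℝ × (ℝ × ℝ) → ℝ := fun p =>
  (2 - 3 * |p.1 - p.2.1| - 6 * p.2.1 * (1 - p.2.1))
    * (2 - 3 * |p.2.2 - p.1| - 6 * p.1 * (1 - p.1))
    * ((2 - 3 * |p.1 - p.2.1| - 6 * p.2.1 * (1 - p.2.1)) ^ 2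
      + (2 - 3 * |p.2.2 - p.1| - 6 * p.1 * (1 - p.1)) ^ 2)

/-- If `U 0, U 1, U 2` are i.i.d. uniform on `[0,1]`,
`W₁ = 2 - 3|U 1 - U 0| - 6 U 0 (1 - U 0)` and `W₂ = 2 - 3|U 2 - U 1| - 6 U 1 (1 - U 1)`,
then `E[W₁ W₂ (W₁² + W₂²)] = -3/28`. -/
theorem expectation_W1_W2_mixed
    {Ω : Type*} [MeasurableSpace Ω] (P : Measure Ω) [IsProbabilityMeasure P]
    (U : Fin 3 → Ω → ℝ) (hmeas : ∀ i, Measurable (U i))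
    (hindep : iIndepFun U P)
    (hunif : ∀ i, Measure.map (U i) P = volume.restrict (Set.Icc (0:ℝ) 1)) :
    ∫ ω, (2 - 3 * |U 1 ω - U 0 ω| - 6 * U 0 ω * (1 - U 0 ω))
        * (2 - 3 * |U 2 ω - U 1 ω| - 6 * U 1 ω * (1 - U 1 ω))
        * ((2 - 3 * |U 1 ω - U 0 ω| - 6 * U 0 ω * (1 - U 0 ω)) ^ 2
          + (2 - 3 * |U 2 ω - U 1 ω| - 6 * U 1 ω * (1 - U 1 ω)) ^ 2) ∂P
      = -(3 / 28) := by
  set μ : Measure ℝ := volume.restrict (Set.Icc (0:ℝ) 1) with hμ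
  haveI : IsProbabilityMeasure μ := ⟨by simp [hμ, Real.volume_Icc]⟩
  have hFcont : Continuous FF := by unfold FF; fun_prop
  -- the law of the triple
  have hpm : Measurable fun ω => (U 0 ω, U 2 ω) := (hmeas 0).prodMk (hmeas 2)
  have h02 : IndepFun (U 0) (U 2) P := hindep.indepFun (by decide)
  have law02 : P.map (fun ω => (U 0 ω, U 2 ω)) = μ.prod μ := by
    rw [(indepFun_iff_map_prod_eq_prod_map_map (hmeas 0).aemeasurable
      (hmeas 2).aemeasurable).1 h02, hunif 0, hunif 2]
  have h1p : IndepFun (U 1) (fun ω => (U 0 ω, U 2 ω)) P :=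
    (hindep.indepFun_prodMk hmeas 0 2 1 (by decide) (by decide)).symm
  have hT : Measurable fun ω => (U 1 ω, (U 0 ω, U 2 ω)) := (hmeas 1).prodMk hpm
  have lawT : P.map (fun ω => (U 1 ω, (U 0 ω, U 2 ω))) = μ.prod (μ.prod μ) := by
    rw [(indepFun_iff_map_prod_eq_prod_map_map (hmeas 1).aemeasurable
      hpm.aemeasurable).1 h1p, hunif 1, law02]
  -- rewrite integrand
  have step1 : (∫ ω, (2 - 3 * |U 1 ω - U 0 ω| - 6 * U 0 ω * (1 - U 0 ω))
        * (2 - 3 * |U 2 ω - U 1 ω| - 6 * U 1 ω * (1 - U 1 ω))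
        * ((2 - 3 * |U 1 ω - U 0 ω| - 6 * U 0 ω * (1 - U 0 ω)) ^ 2
          + (2 - 3 * |U 2 ω - U 1 ω| - 6 * U 1 ω * (1 - U 1 ω)) ^ 2) ∂P)
      = ∫ p, FF p ∂(μ.prod (μ.prod μ)) := by
    rw [← lawT, integral_map hT.aemeasurable hFcont.aestronglyMeasurable]
    rfl
  rw [step1]
  -- product measure as restriction
  have hprod2 : μ.prod μ
      = (volume : Measure (ℝ × ℝ)).restrict (Set.Icc (0:ℝ) 1 ×ˢ Set.Icc (0:ℝ) 1) := by
    rw [hμ, Measure.prod_restrict, ← Measure.volume_eq_prod]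
  have hprod3 : μ.prod (μ.prod μ)
      = (volume : Measure (ℝ × (ℝ × ℝ))).restrict
          (Set.Icc (0:ℝ) 1 ×ˢ (Set.Icc (0:ℝ) 1 ×ˢ Set.Icc (0:ℝ) 1)) := by
    rw [hprod2, hμ, Measure.prod_restrict, ← Measure.volume_eq_prod]
  have hK3 : IsCompact (Set.Icc (0:ℝ) 1 ×ˢ (Set.Icc (0:ℝ) 1 ×ˢ Set.Icc (0:ℝ) 1)) :=
    isCompact_Icc.prod (isCompact_Icc.prod isCompact_Icc)
  have hFint : Integrable FF (μ.prod (μ.prod μ)) := by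
    rw [hprod3]
    exact hFcont.continuousOn.integrableOn_compact hK3
  rw [MeasureTheory.integral_prod _ hFint]
  -- inner computation for y ∈ [0,1]
  have hinner : ∀ y ∈ Set.Icc (0:ℝ) 1,
      (∫ q, FF (y, q) ∂(μ.prod μ))
        = (-83/140 + 54/5*y - 99/2*y^2 + 99*y^3 - 207/2*y^4 + 324/5*y^5 - 108/5*y^6) * (1/2 - 3*y + 3*y^2)
          + (-1/2 + 3*y - 3*y^2) * (5/4 - 9*y - 9/2*y^2 + 135*y^3 - 675/2*y^4 + 324*y^5 - 108*y^6) := by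
    intro y hy
    -- split FF (y, ·) as sum of two product functions
    have hsplit : (fun q : ℝ × ℝ => FF (y, q))
        = fun q : ℝ × ℝ => ((2 - 3*|y - q.1| - 6*q.1*(1-q.1))^3 * (2 - 3*|q.2 - y| - 6*y*(1-y))
            + (2 - 3*|y - q.1| - 6*q.1*(1-q.1)) * (2 - 3*|q.2 - y| - 6*y*(1-y))^3) := by
      funext q; unfold FF; simp only; ring
    rw [hsplit]
    have hc1 : Continuous fun q : ℝ × ℝ =>
        (2 - 3*|y - q.1| - 6*q.1*(1-q.1))^3 * (2 - 3*|q.2 - y| - 6*y*(1-y)) := by fun_prop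
    have hc2 : Continuous fun q : ℝ × ℝ =>
        (2 - 3*|y - q.1| - 6*q.1*(1-q.1)) * (2 - 3*|q.2 - y| - 6*y*(1-y))^3 := by fun_prop
    have hK2 : IsCompact (Set.Icc (0:ℝ) 1 ×ˢ Set.Icc (0:ℝ) 1) := isCompact_Icc.prod isCompact_Icc
    have hi1 : Integrable (fun q : ℝ × ℝ =>
        (2 - 3*|y - q.1| - 6*q.1*(1-q.1))^3 * (2 - 3*|q.2 - y| - 6*y*(1-y))) (μ.prod μ) := by
      rw [hprod2]; exact hc1.continuousOn.integrableOn_compact hK2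
    have hi2 : Integrable (fun q : ℝ × ℝ =>
        (2 - 3*|y - q.1| - 6*q.1*(1-q.1)) * (2 - 3*|q.2 - y| - 6*y*(1-y))^3) (μ.prod μ) := by
      rw [hprod2]; exact hc2.continuousOn.integrableOn_compact hK2
    rw [integral_add hi1 hi2]
    rw [MeasureTheory.integral_prod_mul (μ := μ) (ν := μ)
      (f := fun x => (2 - 3*|y - x| - 6*x*(1-x))^3) (g := fun z => (2 - 3*|z - y| - 6*y*(1-y)))]
    rw [MeasureTheory.integral_prod_mul (μ := μ) (ν := μ)
      (f := fun x => (2 - 3*|y - x| - 6*x*(1-x))) (g := fun z => (2 - 3*|z - y| - 6*y*(1-y))^3)]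
    have conv : ∀ f : ℝ → ℝ, (∫ t, f t ∂μ) = ∫ t in (0:ℝ)..1, f t := by
      intro f
      rw [hμ, MeasureTheory.integral_Icc_eq_integral_Ioc,
        ← intervalIntegral.integral_of_le (zero_le_one)]
    rw [conv, conv, conv, conv, A3_eq y hy.1 hy.2, B1_eq y hy.1 hy.2,
      A1_eq y hy.1 hy.2, B3_eq y hy.1 hy.2]
  calc (∫ y, ∫ q, FF (y, q) ∂(μ.prod μ) ∂μ)
      = ∫ y in Set.Icc (0:ℝ) 1,
          ((-83/140 + 54/5*y - 99/2*y^2 + 99*y^3 - 207/2*y^4 + 324/5*y^5 - 108/5*y^6) * (1/2 - 3*y + 3*y^2)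
            + (-1/2 + 3*y - 3*y^2) * (5/4 - 9*y - 9/2*y^2 + 135*y^3 - 675/2*y^4 + 324*y^5 - 108*y^6)) := by
        rw [hμ]
        exact setIntegral_congr_fun measurableSet_Icc hinner
    _ = -(3/28) := by
        rw [MeasureTheory.integral_Icc_eq_integral_Ioc,
          ← intervalIntegral.integral_of_le (zero_le_one)]
        exact final_poly_integral
end

section
/- Let U_1, ..., U_4 be i.i.d. uniform on [0,1] and W_i = 2 - 3|U_{i+1} - U_i| - 6 U_i(1 - U_i) for i = 1, 2, 3. Then E[W_1 W_2 W_3 (W_1 + W_2 + W_3)] = -37/700. -/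
open MeasureTheory ProbabilityTheory

lemma hasDerivAt_mono (c : ℝ) (n : ℕ) (x : ℝ) :
    HasDerivAt (fun y : ℝ => c * y ^ (n+1) / ((n:ℝ)+1)) (c * x ^ n) x := by
  have h := ((hasDerivAt_pow (n+1) x).const_mul c).div_const ((n:ℝ)+1)
  simp only [Nat.add_sub_cancel, Nat.cast_add, Nat.cast_one] at h
  refine h.congr_deriv ?_
  have hn : ((n:ℝ)+1) ≠ 0 := by positivity
  rw [div_eq_iff hn]; ring

lemma ipoly (a b c0 c1 c2 c3 c4 c5 c6 c7 c8 : ℝ) :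
    (∫ x in a..b, (c0 + c1*x + c2*x^2 + c3*x^3 + c4*x^4 + c5*x^5 + c6*x^6 + c7*x^7 + c8*x^8)) =
      (c0*b + c1*b^2/2 + c2*b^3/3 + c3*b^4/4 + c4*b^5/5 + c5*b^6/6 + c6*b^7/7 + c7*b^8/8 + c8*b^9/9)
      - (c0*a + c1*a^2/2 + c2*a^3/3 + c3*a^4/4 + c4*a^5/5 + c5*a^6/6 + c6*a^7/7 + c7*a^8/8 + c8*a^9/9) := by
  have hd : ∀ x ∈ Set.uIcc a b,
      HasDerivAt (fun y : ℝ => c0*y + c1*y^2/2 + c2*y^3/3 + c3*y^4/4 + c4*y^5/5 + c5*y^6/6 + c6*y^7/7 + c7*y^8/8 + c8*y^9/9)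
        (c0 + c1*x + c2*x^2 + c3*x^3 + c4*x^4 + c5*x^5 + c6*x^6 + c7*x^7 + c8*x^8) x := by
    intro x _
    have h0 := hasDerivAt_mono c0 0 x
    have h1 := hasDerivAt_mono c1 1 x
    have h2 := hasDerivAt_mono c2 2 x
    have h3 := hasDerivAt_mono c3 3 x
    have h4 := hasDerivAt_mono c4 4 x
    have h5 := hasDerivAt_mono c5 5 x
    have h6 := hasDerivAt_mono c6 6 x
    have h7 := hasDerivAt_mono c7 7 x
    have h8 := hasDerivAt_mono c8 8 x
    norm_num at h0 h1 h2 h3 h4 h5 h6 h7 h8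
    exact ((((((((h0.add h1).add h2).add h3).add h4).add h5).add h6).add h7).add h8)
  exact intervalIntegral.integral_eq_sub_of_hasDerivAt hd
    ((by fun_prop : Continuous fun x : ℝ => c0 + c1*x + c2*x^2 + c3*x^3 + c4*x^4 + c5*x^5 + c6*x^6 + c7*x^7 + c8*x^8).intervalIntegrable a b)

lemma intD (t : ℝ) (h0 : 0 ≤ t) (h1 : t ≤ 1) :
    (∫ x in Set.Icc (0:ℝ) 1, (2 - 3*|x - t| - 6*t*(1 - t))) = (1/2) + (-3)*t + (3)*t^2 := by
  have hc : Continuous fun x : ℝ => (2 - 3*|x - t| - 6*t*(1 - t)) := by fun_prop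
  rw [MeasureTheory.integral_Icc_eq_integral_Ioc, ← intervalIntegral.integral_of_le zero_le_one,
    ← intervalIntegral.integral_add_adjacent_intervals (a := 0) (b := t) (c := 1)
      (hc.intervalIntegrable 0 t) (hc.intervalIntegrable t 1)]
  have e1 : (∫ x in (0:ℝ)..t, (2 - 3*|x - t| - 6*t*(1 - t))) = ∫ x in (0:ℝ)..t,
      (((2) + (-9)*t + (6)*t^2) + ((3))*x + (0)*x^2 + (0)*x^3 + (0)*x^4 + (0)*x^5 + (0)*x^6 + (0)*x^7 + (0)*x^8) := by
    apply intervalIntegral.integral_congr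
    intro x hx
    beta_reduce
    rw [Set.uIcc_of_le h0] at hx
    rw [abs_of_nonpos (by linarith [hx.1, hx.2] : x - t ≤ 0)]
    ring
  have e2 : (∫ x in (t:ℝ)..1, (2 - 3*|x - t| - 6*t*(1 - t))) = ∫ x in (t:ℝ)..1,
      (((2) + (-3)*t + (6)*t^2) + ((-3))*x + (0)*x^2 + (0)*x^3 + (0)*x^4 + (0)*x^5 + (0)*x^6 + (0)*x^7 + (0)*x^8) := by
    apply intervalIntegral.integral_congr
    intro x hx
    beta_reduce
    rw [Set.uIcc_of_le h1] at hx
    rw [abs_of_nonneg (by linarith [hx.1, hx.2] : (0:ℝ) ≤ x - t)]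
    ring
  rw [e1, e2, ipoly, ipoly]
  ring

lemma intD2 (t : ℝ) (h0 : 0 ≤ t) (h1 : t ≤ 1) :
    (∫ x in Set.Icc (0:ℝ) 1, ((2 - 3*|x - t| - 6*t*(1 - t))^2)) = (1) + (-3)*t + (3)*t^2 := by
  have hc : Continuous fun x : ℝ => ((2 - 3*|x - t| - 6*t*(1 - t))^2) := by fun_prop
  rw [MeasureTheory.integral_Icc_eq_integral_Ioc, ← intervalIntegral.integral_of_le zero_le_one,
    ← intervalIntegral.integral_add_adjacent_intervals (a := 0) (b := t) (c := 1)
      (hc.intervalIntegrable 0 t) (hc.intervalIntegrable t 1)]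
  have e1 : (∫ x in (0:ℝ)..t, ((2 - 3*|x - t| - 6*t*(1 - t))^2)) = ∫ x in (0:ℝ)..t,
      (((4) + (-36)*t + (105)*t^2 + (-108)*t^3 + (36)*t^4) + ((12) + (-54)*t + (36)*t^2)*x + ((9))*x^2 + (0)*x^3 + (0)*x^4 + (0)*x^5 + (0)*x^6 + (0)*x^7 + (0)*x^8) := by
    apply intervalIntegral.integral_congr
    intro x hx
    beta_reduce
    rw [Set.uIcc_of_le h0] at hx
    rw [abs_of_nonpos (by linarith [hx.1, hx.2] : x - t ≤ 0)]
    ring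
  have e2 : (∫ x in (t:ℝ)..1, ((2 - 3*|x - t| - 6*t*(1 - t))^2)) = ∫ x in (t:ℝ)..1,
      (((4) + (-12)*t + (33)*t^2 + (-36)*t^3 + (36)*t^4) + ((-12) + (18)*t + (-36)*t^2)*x + ((9))*x^2 + (0)*x^3 + (0)*x^4 + (0)*x^5 + (0)*x^6 + (0)*x^7 + (0)*x^8) := by
    apply intervalIntegral.integral_congr
    intro x hx
    beta_reduce
    rw [Set.uIcc_of_le h1] at hx
    rw [abs_of_nonneg (by linarith [hx.1, hx.2] : (0:ℝ) ≤ x - t)]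
    ring
  rw [e1, e2, ipoly, ipoly]
  ring

lemma intA (t : ℝ) (h0 : 0 ≤ t) (h1 : t ≤ 1) :
    (∫ x in Set.Icc (0:ℝ) 1, (2 - 3*|t - x| - 6*x*(1 - x))) = (-1/2) + (3)*t + (-3)*t^2 := by
  have hc : Continuous fun x : ℝ => (2 - 3*|t - x| - 6*x*(1 - x)) := by fun_prop
  rw [MeasureTheory.integral_Icc_eq_integral_Ioc, ← intervalIntegral.integral_of_le zero_le_one,
    ← intervalIntegral.integral_add_adjacent_intervals (a := 0) (b := t) (c := 1)
      (hc.intervalIntegrable 0 t) (hc.intervalIntegrable t 1)]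
  have e1 : (∫ x in (0:ℝ)..t, (2 - 3*|t - x| - 6*x*(1 - x))) = ∫ x in (0:ℝ)..t,
      (((2) + (-3)*t) + ((-3))*x + ((6))*x^2 + (0)*x^3 + (0)*x^4 + (0)*x^5 + (0)*x^6 + (0)*x^7 + (0)*x^8) := by
    apply intervalIntegral.integral_congr
    intro x hx
    beta_reduce
    rw [Set.uIcc_of_le h0] at hx
    rw [abs_of_nonneg (by linarith [hx.1, hx.2] : (0:ℝ) ≤ t - x)]
    ring
  have e2 : (∫ x in (t:ℝ)..1, (2 - 3*|t - x| - 6*x*(1 - x))) = ∫ x in (t:ℝ)..1,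
      (((2) + (3)*t) + ((-9))*x + ((6))*x^2 + (0)*x^3 + (0)*x^4 + (0)*x^5 + (0)*x^6 + (0)*x^7 + (0)*x^8) := by
    apply intervalIntegral.integral_congr
    intro x hx
    beta_reduce
    rw [Set.uIcc_of_le h1] at hx
    rw [abs_of_nonpos (by linarith [hx.1, hx.2] : t - x ≤ 0)]
    ring
  rw [e1, e2, ipoly, ipoly]
  ring

lemma intA2 (t : ℝ) (h0 : 0 ≤ t) (h1 : t ≤ 1) :
    (∫ x in Set.Icc (0:ℝ) 1, ((2 - 3*|t - x| - 6*x*(1 - x))^2)) = (6/5) + (-3)*t + (-3)*t^2 + (12)*t^3 + (-6)*t^4 := by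
  have hc : Continuous fun x : ℝ => ((2 - 3*|t - x| - 6*x*(1 - x))^2) := by fun_prop
  rw [MeasureTheory.integral_Icc_eq_integral_Ioc, ← intervalIntegral.integral_of_le zero_le_one,
    ← intervalIntegral.integral_add_adjacent_intervals (a := 0) (b := t) (c := 1)
      (hc.intervalIntegrable 0 t) (hc.intervalIntegrable t 1)]
  have e1 : (∫ x in (0:ℝ)..t, ((2 - 3*|t - x| - 6*x*(1 - x))^2)) = ∫ x in (0:ℝ)..t,
      (((4) + (-12)*t + (9)*t^2) + ((-12) + (18)*t)*x + ((33) + (-36)*t)*x^2 + ((-36))*x^3 + ((36))*x^4 + (0)*x^5 + (0)*x^6 + (0)*x^7 + (0)*x^8) := by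
    apply intervalIntegral.integral_congr
    intro x hx
    beta_reduce
    rw [Set.uIcc_of_le h0] at hx
    rw [abs_of_nonneg (by linarith [hx.1, hx.2] : (0:ℝ) ≤ t - x)]
    ring
  have e2 : (∫ x in (t:ℝ)..1, ((2 - 3*|t - x| - 6*x*(1 - x))^2)) = ∫ x in (t:ℝ)..1,
      (((4) + (12)*t + (9)*t^2) + ((-36) + (-54)*t)*x + ((105) + (36)*t)*x^2 + ((-108))*x^3 + ((36))*x^4 + (0)*x^5 + (0)*x^6 + (0)*x^7 + (0)*x^8) := by
    apply intervalIntegral.integral_congr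
    intro x hx
    beta_reduce
    rw [Set.uIcc_of_le h1] at hx
    rw [abs_of_nonpos (by linarith [hx.1, hx.2] : t - x ≤ 0)]
    ring
  rw [e1, e2, ipoly, ipoly]
  ring

lemma intC (t : ℝ) (h0 : 0 ≤ t) (h1 : t ≤ 1) :
    (∫ x in Set.Icc (0:ℝ) 1, ((-6*t^4 + 12*t^3 - 3*t^2 - 3*t + 6/5) * (2 - 3*|x - t| - 6*t*(1 - t)) * (3*x^2 - 3*x + 1/2)
        + (-3*t^2 + 3*t - 1/2) * (2 - 3*|x - t| - 6*t*(1 - t))^2 * (3*x^2 - 3*x + 1/2)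
        + (-3*t^2 + 3*t - 1/2) * (2 - 3*|x - t| - 6*t*(1 - t)) * (3*x^2 - 3*x + 1))) = (-1/5) + (39/20)*t + (-9/2)*t^2 + (-219/10)*t^3 + (2829/20)*t^4 + (-333)*t^5 + (405)*t^6 + (-252)*t^7 + (63)*t^8 := by
  have hc : Continuous fun x : ℝ => ((-6*t^4 + 12*t^3 - 3*t^2 - 3*t + 6/5) * (2 - 3*|x - t| - 6*t*(1 - t)) * (3*x^2 - 3*x + 1/2)
        + (-3*t^2 + 3*t - 1/2) * (2 - 3*|x - t| - 6*t*(1 - t))^2 * (3*x^2 - 3*x + 1/2)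
        + (-3*t^2 + 3*t - 1/2) * (2 - 3*|x - t| - 6*t*(1 - t)) * (3*x^2 - 3*x + 1)) := by fun_prop
  rw [MeasureTheory.integral_Icc_eq_integral_Ioc, ← intervalIntegral.integral_of_le zero_le_one,
    ← intervalIntegral.integral_add_adjacent_intervals (a := 0) (b := t) (c := 1)
      (hc.intervalIntegrable 0 t) (hc.intervalIntegrable t 1)]
  have e1 : (∫ x in (0:ℝ)..t, ((-6*t^4 + 12*t^3 - 3*t^2 - 3*t + 6/5) * (2 - 3*|x - t| - 6*t*(1 - t)) * (3*x^2 - 3*x + 1/2)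
        + (-3*t^2 + 3*t - 1/2) * (2 - 3*|x - t| - 6*t*(1 - t))^2 * (3*x^2 - 3*x + 1/2)
        + (-3*t^2 + 3*t - 1/2) * (2 - 3*|x - t| - 6*t*(1 - t)) * (3*x^2 - 3*x + 1))) = ∫ x in (0:ℝ)..t,
      (((-4/5) + (171/10)*t + (-2163/20)*t^2 + (300)*t^3 + (-831/2)*t^4 + (279)*t^5 + (-72)*t^6) + ((-9/10) + (-351/10)*t + (2097/5)*t^2 + (-1512)*t^3 + (2376)*t^4 + (-1674)*t^5 + (432)*t^6)*x + ((153/20) + (-522/5)*t + (738/5)*t^2 + (747)*t^3 + (-2061)*t^4 + (1674)*t^5 + (-432)*t^6)*x^2 + ((9/5) + (108)*t + (-621)*t^2 + (918)*t^3 + (-378)*t^4)*x^3 + ((-27/2) + (81)*t + (-81)*t^2)*x^4 + (0)*x^5 + (0)*x^6 + (0)*x^7 + (0)*x^8) := by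
    apply intervalIntegral.integral_congr
    intro x hx
    beta_reduce
    rw [Set.uIcc_of_le h0] at hx
    rw [abs_of_nonpos (by linarith [hx.1, hx.2] : x - t ≤ 0)]
    ring
  have e2 : (∫ x in (t:ℝ)..1, ((-6*t^4 + 12*t^3 - 3*t^2 - 3*t + 6/5) * (2 - 3*|x - t| - 6*t*(1 - t)) * (3*x^2 - 3*x + 1/2)
        + (-3*t^2 + 3*t - 1/2) * (2 - 3*|x - t| - 6*t*(1 - t))^2 * (3*x^2 - 3*x + 1/2)
        + (-3*t^2 + 3*t - 1/2) * (2 - 3*|x - t| - 6*t*(1 - t)) * (3*x^2 - 3*x + 1))) = ∫ x in (t:ℝ)..1,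
      (((-4/5) + (117/10)*t + (-903/20)*t^2 + (111)*t^3 + (-327/2)*t^4 + (153)*t^5 + (-72)*t^6) + ((9/2) + (-747/10)*t + (1422/5)*t^2 + (-684)*t^3 + (990)*t^4 + (-918)*t^5 + (432)*t^6)*x + ((-63/4) + (981/5)*t + (-3042/5)*t^2 + (1179)*t^3 + (-1305)*t^4 + (918)*t^5 + (-432)*t^6)*x^2 + ((126/5) + (-216)*t + (459)*t^2 + (-594)*t^3 + (378)*t^4)*x^3 + ((-27/2) + (81)*t + (-81)*t^2)*x^4 + (0)*x^5 + (0)*x^6 + (0)*x^7 + (0)*x^8) := by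
    apply intervalIntegral.integral_congr
    intro x hx
    beta_reduce
    rw [Set.uIcc_of_le h1] at hx
    rw [abs_of_nonneg (by linarith [hx.1, hx.2] : (0:ℝ) ≤ x - t)]
    ring
  rw [e1, e2, ipoly, ipoly]
  ring

lemma intK : (∫ x in Set.Icc (0:ℝ) 1, ((-1/5) + (39/20)*x + (-9/2)*x^2 + (-219/10)*x^3 + (2829/20)*x^4 + (-333)*x^5 + (405)*x^6 + (-252)*x^7 + (63)*x^8)) = -(37/700) := by
  rw [MeasureTheory.integral_Icc_eq_integral_Ioc, ← intervalIntegral.integral_of_le zero_le_one]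
  have e1 : (∫ x in (0:ℝ)..1, ((-1/5) + (39/20)*x + (-9/2)*x^2 + (-219/10)*x^3 + (2829/20)*x^4 + (-333)*x^5 + (405)*x^6 + (-252)*x^7 + (63)*x^8)) = ∫ x in (0:ℝ)..1,
      (((-1/5)) + ((39/20))*x + ((-9/2))*x^2 + ((-219/10))*x^3 + ((2829/20))*x^4 + ((-333))*x^5 + ((405))*x^6 + ((-252))*x^7 + ((63))*x^8) := by
    apply intervalIntegral.integral_congr
    intro x _
    beta_reduce
    ring
  rw [e1, ipoly]
  norm_num


noncomputable def myF : ℝ × (ℝ × (ℝ × ℝ)) → ℝ := fun p =>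
  (2 - 3 * |p.1 - p.2.2.1| - 6 * p.2.2.1 * (1 - p.2.2.1))
    * (2 - 3 * |p.2.1 - p.1| - 6 * p.1 * (1 - p.1))
    * (2 - 3 * |p.2.2.2 - p.2.1| - 6 * p.2.1 * (1 - p.2.1))
    * ((2 - 3 * |p.1 - p.2.2.1| - 6 * p.2.2.1 * (1 - p.2.2.1))
      + (2 - 3 * |p.2.1 - p.1| - 6 * p.1 * (1 - p.1))
      + (2 - 3 * |p.2.2.2 - p.2.1| - 6 * p.2.1 * (1 - p.2.1)))

lemma intg {f : ℝ → ℝ} (hf : Continuous f) :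
    MeasureTheory.Integrable f (MeasureTheory.volume.restrict (Set.Icc (0:ℝ) 1)) :=
  hf.continuousOn.integrableOn_compact isCompact_Icc

/-- If `U 0, U 1, U 2, U 3` are i.i.d. uniform on `[0,1]` and
`Wᵢ = 2 - 3|U (i+1) - U i| - 6 U i (1 - U i)` for `i = 0, 1, 2`,
then `E[W₁ W₂ W₃ (W₁ + W₂ + W₃)] = -37/700`. -/
theorem expectation_W1_W2_W3_sum
    {Ω : Type*} [MeasurableSpace Ω] (P : Measure Ω) [IsProbabilityMeasure P]
    (U : Fin 4 → Ω → ℝ) (hmeas : ∀ i, Measurable (U i))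
    (hindep : iIndepFun U P)
    (hunif : ∀ i, Measure.map (U i) P = volume.restrict (Set.Icc (0:ℝ) 1)) :
    ∫ ω, (2 - 3 * |U 1 ω - U 0 ω| - 6 * U 0 ω * (1 - U 0 ω))
        * (2 - 3 * |U 2 ω - U 1 ω| - 6 * U 1 ω * (1 - U 1 ω))
        * (2 - 3 * |U 3 ω - U 2 ω| - 6 * U 2 ω * (1 - U 2 ω))
        * ((2 - 3 * |U 1 ω - U 0 ω| - 6 * U 0 ω * (1 - U 0 ω))
          + (2 - 3 * |U 2 ω - U 1 ω| - 6 * U 1 ω * (1 - U 1 ω))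
          + (2 - 3 * |U 3 ω - U 2 ω| - 6 * U 2 ω * (1 - U 2 ω))) ∂P
      = -(37 / 700) := by
  have hTm : Measurable (fun ω => (U 1 ω, (U 2 ω, (U 0 ω, U 3 ω)))) :=
    (hmeas 1).prodMk ((hmeas 2).prodMk ((hmeas 0).prodMk (hmeas 3)))
  have hFc : Continuous myF := by unfold myF; fun_prop
  have h03 : Measure.map (fun ω => (U 0 ω, U 3 ω)) P = (MeasureTheory.volume.restrict (Set.Icc (0:ℝ) 1)).prod (MeasureTheory.volume.restrict (Set.Icc (0:ℝ) 1)) := by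
    have h := (indepFun_iff_map_prod_eq_prod_map_map (hmeas 0).aemeasurable
      (hmeas 3).aemeasurable).mp (hindep.indepFun (show (0 : Fin 4) ≠ 3 by decide))
    rw [hunif 0, hunif 3] at h
    exact h
  have h203 : Measure.map (fun ω => (U 2 ω, (U 0 ω, U 3 ω))) P
      = (MeasureTheory.volume.restrict (Set.Icc (0:ℝ) 1)).prod ((MeasureTheory.volume.restrict (Set.Icc (0:ℝ) 1)).prod (MeasureTheory.volume.restrict (Set.Icc (0:ℝ) 1))) := by
    have hi : IndepFun (U 2) (fun ω => (U 0 ω, U 3 ω)) P :=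
      (hindep.indepFun_prodMk hmeas 0 3 2 (by decide) (by decide)).symm
    have h := (indepFun_iff_map_prod_eq_prod_map_map (hmeas 2).aemeasurable
      ((hmeas 0).prodMk (hmeas 3)).aemeasurable).mp hi
    rw [hunif 2, h03] at h
    exact h
  have h1r : IndepFun (U 1) (fun ω => (U 2 ω, (U 0 ω, U 3 ω))) P := by
    classical
    have h := hindep.indepFun_finset {1} {0, 2, 3} (by decide) hmeas
    exact h.comp (measurable_pi_apply (⟨1, by decide⟩ : ({1} : Finset (Fin 4))))
      ((measurable_pi_apply (⟨2, by decide⟩ : ({0, 2, 3} : Finset (Fin 4)))).prodMk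
        ((measurable_pi_apply (⟨0, by decide⟩ : ({0, 2, 3} : Finset (Fin 4)))).prodMk
          (measurable_pi_apply (⟨3, by decide⟩ : ({0, 2, 3} : Finset (Fin 4))))))
  have hT : Measure.map (fun ω => (U 1 ω, (U 2 ω, (U 0 ω, U 3 ω)))) P
      = (MeasureTheory.volume.restrict (Set.Icc (0:ℝ) 1)).prod ((MeasureTheory.volume.restrict (Set.Icc (0:ℝ) 1)).prod ((MeasureTheory.volume.restrict (Set.Icc (0:ℝ) 1)).prod (MeasureTheory.volume.restrict (Set.Icc (0:ℝ) 1)))) := by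
    have h := (indepFun_iff_map_prod_eq_prod_map_map (hmeas 1).aemeasurable
      ((hmeas 2).prodMk ((hmeas 0).prodMk (hmeas 3))).aemeasurable).mp h1r
    rw [hunif 1, h203] at h
    exact h
  have hbox2 : (MeasureTheory.volume.restrict (Set.Icc (0:ℝ) 1)).prod (MeasureTheory.volume.restrict (Set.Icc (0:ℝ) 1))
      = (volume : Measure (ℝ × ℝ)).restrict ((Set.Icc (0:ℝ) 1) ×ˢ (Set.Icc (0:ℝ) 1)) := by
    rw [Measure.prod_restrict, ← Measure.volume_eq_prod]
  have hbox3 : (MeasureTheory.volume.restrict (Set.Icc (0:ℝ) 1)).prod ((MeasureTheory.volume.restrict (Set.Icc (0:ℝ) 1)).prod (MeasureTheory.volume.restrict (Set.Icc (0:ℝ) 1)))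
      = (volume : Measure (ℝ × (ℝ × ℝ))).restrict ((Set.Icc (0:ℝ) 1) ×ˢ ((Set.Icc (0:ℝ) 1) ×ˢ (Set.Icc (0:ℝ) 1))) := by
    rw [hbox2, Measure.prod_restrict, ← Measure.volume_eq_prod]
  have hbox4 : (MeasureTheory.volume.restrict (Set.Icc (0:ℝ) 1)).prod ((MeasureTheory.volume.restrict (Set.Icc (0:ℝ) 1)).prod ((MeasureTheory.volume.restrict (Set.Icc (0:ℝ) 1)).prod (MeasureTheory.volume.restrict (Set.Icc (0:ℝ) 1))))
      = (volume : Measure (ℝ × (ℝ × (ℝ × ℝ)))).restrict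
          ((Set.Icc (0:ℝ) 1) ×ˢ ((Set.Icc (0:ℝ) 1) ×ˢ ((Set.Icc (0:ℝ) 1) ×ˢ (Set.Icc (0:ℝ) 1)))) := by
    rw [hbox3, Measure.prod_restrict, ← Measure.volume_eq_prod]
  have hi4 : MeasureTheory.Integrable myF ((MeasureTheory.volume.restrict (Set.Icc (0:ℝ) 1)).prod ((MeasureTheory.volume.restrict (Set.Icc (0:ℝ) 1)).prod ((MeasureTheory.volume.restrict (Set.Icc (0:ℝ) 1)).prod (MeasureTheory.volume.restrict (Set.Icc (0:ℝ) 1))))) := by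
    rw [hbox4]
    exact hFc.continuousOn.integrableOn_compact
      (isCompact_Icc.prod (isCompact_Icc.prod (isCompact_Icc.prod isCompact_Icc)))
  have hi3 : ∀ b : ℝ, MeasureTheory.Integrable (fun q : ℝ × (ℝ × ℝ) => myF (b, q))
      ((MeasureTheory.volume.restrict (Set.Icc (0:ℝ) 1)).prod ((MeasureTheory.volume.restrict (Set.Icc (0:ℝ) 1)).prod (MeasureTheory.volume.restrict (Set.Icc (0:ℝ) 1)))) := by
    intro b
    rw [hbox3]
    exact (hFc.comp (continuous_const.prodMk continuous_id)).continuousOn.integrableOn_compact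
      (isCompact_Icc.prod (isCompact_Icc.prod isCompact_Icc))
  have hi2 : ∀ b c : ℝ, MeasureTheory.Integrable (fun z : ℝ × ℝ => myF (b, (c, z)))
      ((MeasureTheory.volume.restrict (Set.Icc (0:ℝ) 1)).prod (MeasureTheory.volume.restrict (Set.Icc (0:ℝ) 1))) := by
    intro b c
    rw [hbox2]
    exact (hFc.comp (continuous_const.prodMk
      (continuous_const.prodMk continuous_id))).continuousOn.integrableOn_compact
      (isCompact_Icc.prod isCompact_Icc)
  have key : (∫ ω, myF (U 1 ω, (U 2 ω, (U 0 ω, U 3 ω))) ∂P) = -(37 / 700) := by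
    calc ∫ ω, myF (U 1 ω, (U 2 ω, (U 0 ω, U 3 ω))) ∂P
        = ∫ p, myF p ∂(Measure.map (fun ω => (U 1 ω, (U 2 ω, (U 0 ω, U 3 ω)))) P) :=
          (integral_map hTm.aemeasurable hFc.aestronglyMeasurable).symm
      _ = ∫ p, myF p ∂((MeasureTheory.volume.restrict (Set.Icc (0:ℝ) 1)).prod ((MeasureTheory.volume.restrict (Set.Icc (0:ℝ) 1)).prod ((MeasureTheory.volume.restrict (Set.Icc (0:ℝ) 1)).prod (MeasureTheory.volume.restrict (Set.Icc (0:ℝ) 1))))) := by rw [hT]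
      _ = ∫ b in Set.Icc (0:ℝ) 1, ∫ q : ℝ × (ℝ × ℝ), myF (b, q) ∂((MeasureTheory.volume.restrict (Set.Icc (0:ℝ) 1)).prod ((MeasureTheory.volume.restrict (Set.Icc (0:ℝ) 1)).prod (MeasureTheory.volume.restrict (Set.Icc (0:ℝ) 1)))) :=
          MeasureTheory.integral_prod _ hi4
      _ = ∫ b in Set.Icc (0:ℝ) 1, ∫ c in Set.Icc (0:ℝ) 1, ∫ z : ℝ × ℝ, myF (b, (c, z)) ∂((MeasureTheory.volume.restrict (Set.Icc (0:ℝ) 1)).prod (MeasureTheory.volume.restrict (Set.Icc (0:ℝ) 1))) := by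
          refine MeasureTheory.integral_congr_ae (Filter.Eventually.of_forall fun b => ?_)
          exact MeasureTheory.integral_prod _ (hi3 b)
      _ = ∫ b in Set.Icc (0:ℝ) 1, ∫ c in Set.Icc (0:ℝ) 1, ∫ a in Set.Icc (0:ℝ) 1, ∫ d in Set.Icc (0:ℝ) 1, myF (b, (c, (a, d))) := by
          refine MeasureTheory.integral_congr_ae (Filter.Eventually.of_forall fun b => ?_)
          refine MeasureTheory.integral_congr_ae (Filter.Eventually.of_forall fun c => ?_)
          exact MeasureTheory.integral_prod _ (hi2 b c)
      _ = ∫ b in Set.Icc (0:ℝ) 1, ((-1/5) + (39/20)*b + (-9/2)*b^2 + (-219/10)*b^3 + (2829/20)*b^4 + (-333)*b^5 + (405)*b^6 + (-252)*b^7 + (63)*b^8) := by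
          apply MeasureTheory.setIntegral_congr_fun measurableSet_Icc
          intro b hb
          show (∫ c in Set.Icc (0:ℝ) 1, ∫ a in Set.Icc (0:ℝ) 1, ∫ d in Set.Icc (0:ℝ) 1, ((2 - 3 * |b - a| - 6 * a * (1 - a)) * (2 - 3 * |c - b| - 6 * b * (1 - b)) * (2 - 3 * |d - c| - 6 * c * (1 - c)) * ((2 - 3 * |b - a| - 6 * a * (1 - a)) + (2 - 3 * |c - b| - 6 * b * (1 - b)) + (2 - 3 * |d - c| - 6 * c * (1 - c))))) = (-1/5) + (39/20)*b + (-9/2)*b^2 + (-219/10)*b^3 + (2829/20)*b^4 + (-333)*b^5 + (405)*b^6 + (-252)*b^7 + (63)*b^8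
          have hbc : (∫ c in Set.Icc (0:ℝ) 1, ∫ a in Set.Icc (0:ℝ) 1, ∫ d in Set.Icc (0:ℝ) 1, ((2 - 3 * |b - a| - 6 * a * (1 - a)) * (2 - 3 * |c - b| - 6 * b * (1 - b)) * (2 - 3 * |d - c| - 6 * c * (1 - c)) * ((2 - 3 * |b - a| - 6 * a * (1 - a)) + (2 - 3 * |c - b| - 6 * b * (1 - b)) + (2 - 3 * |d - c| - 6 * c * (1 - c)))))
              = ∫ c in Set.Icc (0:ℝ) 1, ((-6*b^4 + 12*b^3 - 3*b^2 - 3*b + 6/5) * (2 - 3*|c - b| - 6*b*(1 - b)) * (3*c^2 - 3*c + 1/2)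
        + (-3*b^2 + 3*b - 1/2) * (2 - 3*|c - b| - 6*b*(1 - b))^2 * (3*c^2 - 3*c + 1/2)
        + (-3*b^2 + 3*b - 1/2) * (2 - 3*|c - b| - 6*b*(1 - b)) * (3*c^2 - 3*c + 1)) := by
            apply MeasureTheory.setIntegral_congr_fun measurableSet_Icc
            intro c hc
            show (∫ a in Set.Icc (0:ℝ) 1, ∫ d in Set.Icc (0:ℝ) 1, ((2 - 3 * |b - a| - 6 * a * (1 - a)) * (2 - 3 * |c - b| - 6 * b * (1 - b)) * (2 - 3 * |d - c| - 6 * c * (1 - c)) * ((2 - 3 * |b - a| - 6 * a * (1 - a)) + (2 - 3 * |c - b| - 6 * b * (1 - b)) + (2 - 3 * |d - c| - 6 * c * (1 - c))))) = (-6*b^4 + 12*b^3 - 3*b^2 - 3*b + 6/5) * (2 - 3*|c - b| - 6*b*(1 - b)) * (3*c^2 - 3*c + 1/2)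
        + (-3*b^2 + 3*b - 1/2) * (2 - 3*|c - b| - 6*b*(1 - b))^2 * (3*c^2 - 3*c + 1/2)
        + (-3*b^2 + 3*b - 1/2) * (2 - 3*|c - b| - 6*b*(1 - b)) * (3*c^2 - 3*c + 1)
            have stepD : ∀ a : ℝ, (∫ d in Set.Icc (0:ℝ) 1, ((2 - 3 * |b - a| - 6 * a * (1 - a)) * (2 - 3 * |c - b| - 6 * b * (1 - b)) * (2 - 3 * |d - c| - 6 * c * (1 - c)) * ((2 - 3 * |b - a| - 6 * a * (1 - a)) + (2 - 3 * |c - b| - 6 * b * (1 - b)) + (2 - 3 * |d - c| - 6 * c * (1 - c))))) = ((2 - 3 * |b - a| - 6 * a * (1 - a))^2 * (2 - 3 * |c - b| - 6 * b * (1 - b)) + (2 - 3 * |b - a| - 6 * a * (1 - a)) * (2 - 3 * |c - b| - 6 * b * (1 - b))^2) * ((1/2) + (-3)*c + (3)*c^2) + ((2 - 3 * |b - a| - 6 * a * (1 - a)) * (2 - 3 * |c - b| - 6 * b * (1 - b))) * ((1) + (-3)*c + (3)*c^2) := by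
              intro a
              have h1 : (∫ d in Set.Icc (0:ℝ) 1, ((2 - 3 * |b - a| - 6 * a * (1 - a)) * (2 - 3 * |c - b| - 6 * b * (1 - b)) * (2 - 3 * |d - c| - 6 * c * (1 - c)) * ((2 - 3 * |b - a| - 6 * a * (1 - a)) + (2 - 3 * |c - b| - 6 * b * (1 - b)) + (2 - 3 * |d - c| - 6 * c * (1 - c))))) = ∫ d in Set.Icc (0:ℝ) 1, (((2 - 3 * |b - a| - 6 * a * (1 - a))^2 * (2 - 3 * |c - b| - 6 * b * (1 - b)) + (2 - 3 * |b - a| - 6 * a * (1 - a)) * (2 - 3 * |c - b| - 6 * b * (1 - b))^2) * (2 - 3 * |d - c| - 6 * c * (1 - c)) + ((2 - 3 * |b - a| - 6 * a * (1 - a)) * (2 - 3 * |c - b| - 6 * b * (1 - b))) * (2 - 3 * |d - c| - 6 * c * (1 - c))^2) := by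
                apply MeasureTheory.setIntegral_congr_fun measurableSet_Icc
                intro d _
                beta_reduce
                ring
              have ig1 : MeasureTheory.Integrable
                  (fun d : ℝ => ((2 - 3 * |b - a| - 6 * a * (1 - a))^2 * (2 - 3 * |c - b| - 6 * b * (1 - b)) + (2 - 3 * |b - a| - 6 * a * (1 - a)) * (2 - 3 * |c - b| - 6 * b * (1 - b))^2) * (2 - 3 * |d - c| - 6 * c * (1 - c))) (MeasureTheory.volume.restrict (Set.Icc (0:ℝ) 1)) :=
                intg (by fun_prop)
              have ig2 : MeasureTheory.Integrable
                  (fun d : ℝ => ((2 - 3 * |b - a| - 6 * a * (1 - a)) * (2 - 3 * |c - b| - 6 * b * (1 - b))) * (2 - 3 * |d - c| - 6 * c * (1 - c))^2) (MeasureTheory.volume.restrict (Set.Icc (0:ℝ) 1)) :=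
                intg (by fun_prop)
              rw [h1, MeasureTheory.integral_add ig1 ig2, MeasureTheory.integral_const_mul,
                MeasureTheory.integral_const_mul, intD c hc.1 hc.2, intD2 c hc.1 hc.2]
            have h2 : (∫ a in Set.Icc (0:ℝ) 1, ∫ d in Set.Icc (0:ℝ) 1, ((2 - 3 * |b - a| - 6 * a * (1 - a)) * (2 - 3 * |c - b| - 6 * b * (1 - b)) * (2 - 3 * |d - c| - 6 * c * (1 - c)) * ((2 - 3 * |b - a| - 6 * a * (1 - a)) + (2 - 3 * |c - b| - 6 * b * (1 - b)) + (2 - 3 * |d - c| - 6 * c * (1 - c))))) = ∫ a in Set.Icc (0:ℝ) 1, (((2 - 3 * |c - b| - 6 * b * (1 - b)) * ((1/2) + (-3)*c + (3)*c^2)) * (2 - 3 * |b - a| - 6 * a * (1 - a))^2 + (((2 - 3 * |c - b| - 6 * b * (1 - b))^2 * ((1/2) + (-3)*c + (3)*c^2)) + (2 - 3 * |c - b| - 6 * b * (1 - b)) * ((1) + (-3)*c + (3)*c^2)) * (2 - 3 * |b - a| - 6 * a * (1 - a))) := by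
              apply MeasureTheory.setIntegral_congr_fun measurableSet_Icc
              intro a _
              beta_reduce
              rw [stepD a]
              ring
            have ig3 : MeasureTheory.Integrable
                (fun a : ℝ => ((2 - 3 * |c - b| - 6 * b * (1 - b)) * ((1/2) + (-3)*c + (3)*c^2)) * (2 - 3 * |b - a| - 6 * a * (1 - a))^2) (MeasureTheory.volume.restrict (Set.Icc (0:ℝ) 1)) :=
              intg (by fun_prop)
            have ig4 : MeasureTheory.Integrable
                (fun a : ℝ => (((2 - 3 * |c - b| - 6 * b * (1 - b))^2 * ((1/2) + (-3)*c + (3)*c^2)) + (2 - 3 * |c - b| - 6 * b * (1 - b)) * ((1) + (-3)*c + (3)*c^2)) * (2 - 3 * |b - a| - 6 * a * (1 - a))) (MeasureTheory.volume.restrict (Set.Icc (0:ℝ) 1)) :=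
              intg (by fun_prop)
            rw [h2, MeasureTheory.integral_add ig3 ig4, MeasureTheory.integral_const_mul,
              MeasureTheory.integral_const_mul, intA2 b hb.1 hb.2, intA b hb.1 hb.2]
            ring
          rw [hbc]
          exact intC b hb.1 hb.2
      _ = -(37 / 700) := intK
  exact key
end

section
/- Let U_1, ..., U_5 be i.i.d. uniform on [0,1] and W_i = 2 - 3|U_{i+1} - U_i| - 6 U_i(1 - U_i) for i = 1, ..., 4. Then E[W_1 W_2 W_3 W_4] = 1/700. -/
open MeasureTheory ProbabilityTheory

lemma poly_int (a b d0 d1 d2 d3 d4 d5 d6 d7 d8 : ℝ) :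
    ∫ y in a..b, (d0 + d1*y + d2*y^2 + d3*y^3 + d4*y^4 + d5*y^5 + d6*y^6 + d7*y^7 + d8*y^8) =
    (d0*b + d1/2*b^2 + d2/3*b^3 + d3/4*b^4 + d4/5*b^5 + d5/6*b^6 + d6/7*b^7 + d7/8*b^8 + d8/9*b^9)
    - (d0*a + d1/2*a^2 + d2/3*a^3 + d3/4*a^4 + d4/5*a^5 + d5/6*a^6 + d6/7*a^7 + d7/8*a^8 + d8/9*a^9) := by
  have h : ∀ y : ℝ, HasDerivAt (fun y : ℝ => d0*y + d1/2*y^2 + d2/3*y^3 + d3/4*y^4 + d4/5*y^5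
      + d5/6*y^6 + d6/7*y^7 + d7/8*y^8 + d8/9*y^9)
      (d0 + d1*y + d2*y^2 + d3*y^3 + d4*y^4 + d5*y^5 + d6*y^6 + d7*y^7 + d8*y^8) y := by
    intro y
    have H := ((((((((((hasDerivAt_id y).const_mul d0).add
      (((hasDerivAt_pow 2 y)).const_mul (d1/2))).add
      (((hasDerivAt_pow 3 y)).const_mul (d2/3))).add
      (((hasDerivAt_pow 4 y)).const_mul (d3/4))).add
      (((hasDerivAt_pow 5 y)).const_mul (d4/5))).add
      (((hasDerivAt_pow 6 y)).const_mul (d5/6))).add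
      (((hasDerivAt_pow 7 y)).const_mul (d6/7))).add
      (((hasDerivAt_pow 8 y)).const_mul (d7/8))).add
      (((hasDerivAt_pow 9 y)).const_mul (d8/9)))
    refine H.congr_deriv ?_
    push_cast
    ring
  rw [intervalIntegral.integral_eq_sub_of_hasDerivAt (fun y _ => h y)
    ((Continuous.intervalIntegrable (by continuity) a b))]

lemma abs_poly_int (x c0 c1 c2 c3 c4 c5 c6 : ℝ) (h0 : 0 ≤ x) (h1 : x ≤ 1) :
    ∫ y in (0:ℝ)..1, |y - x| * (c0 + c1*y + c2*y^2 + c3*y^3 + c4*y^4 + c5*y^5 + c6*y^6) =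
      c0*(x^2 - x + 1/2) + c1*(x^3/3 - x/2 + 1/3) + c2*(x^4/6 - x/3 + 1/4)
      + c3*(x^5/10 - x/4 + 1/5) + c4*(x^6/15 - x/5 + 1/6) + c5*(x^7/21 - x/6 + 1/7)
      + c6*(x^8/28 - x/7 + 1/8) := by
  have hcont : Continuous fun y : ℝ => |y - x| * (c0 + c1*y + c2*y^2 + c3*y^3 + c4*y^4 + c5*y^5 + c6*y^6) := by
    exact ((continuous_id.sub continuous_const).abs).mul (by continuity)
  rw [← intervalIntegral.integral_add_adjacent_intervals (a := 0) (b := x) (c := 1)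
    (hcont.intervalIntegrable 0 x) (hcont.intervalIntegrable x 1)]
  have e1 : ∫ y in (0:ℝ)..x, |y - x| * (c0 + c1*y + c2*y^2 + c3*y^3 + c4*y^4 + c5*y^5 + c6*y^6)
      = ∫ y in (0:ℝ)..x, ((x*c0) + (x*c1 - c0)*y + (x*c2 - c1)*y^2 + (x*c3 - c2)*y^3
        + (x*c4 - c3)*y^4 + (x*c5 - c4)*y^5 + (x*c6 - c5)*y^6 + (-c6)*y^7 + (0:ℝ)*y^8) := by
    apply intervalIntegral.integral_congr
    intro y hy
    dsimp only
    rw [Set.uIcc_of_le h0] at hy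
    rw [abs_of_nonpos (by linarith [hy.2] : y - x ≤ 0)]
    ring
  have e2 : ∫ y in x..(1:ℝ), |y - x| * (c0 + c1*y + c2*y^2 + c3*y^3 + c4*y^4 + c5*y^5 + c6*y^6)
      = ∫ y in x..(1:ℝ), ((-(x*c0)) + (c0 - x*c1)*y + (c1 - x*c2)*y^2 + (c2 - x*c3)*y^3
        + (c3 - x*c4)*y^4 + (c4 - x*c5)*y^5 + (c5 - x*c6)*y^6 + (c6)*y^7 + (0:ℝ)*y^8) := by
    apply intervalIntegral.integral_congr
    intro y hy
    dsimp only
    rw [Set.uIcc_of_le h1] at hy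
    rw [abs_of_nonneg (by linarith [hy.1] : 0 ≤ y - x)]
    ring
  rw [e1, e2, poly_int, poly_int]
  ring

lemma Wstep (x c0 c1 c2 c3 c4 c5 c6 : ℝ) (h0 : 0 ≤ x) (h1 : x ≤ 1) :
    ∫ y in (0:ℝ)..1, (2 - 3*|y - x| - 6*x*(1 - x)) * (c0 + c1*y + c2*y^2 + c3*y^3 + c4*y^4 + c5*y^5 + c6*y^6) =
      (2 - 6*x*(1-x)) * (c0 + c1/2 + c2/3 + c3/4 + c4/5 + c5/6 + c6/7)
      - 3*(c0*(x^2 - x + 1/2) + c1*(x^3/3 - x/2 + 1/3) + c2*(x^4/6 - x/3 + 1/4)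
      + c3*(x^5/10 - x/4 + 1/5) + c4*(x^6/15 - x/5 + 1/6) + c5*(x^7/21 - x/6 + 1/7)
      + c6*(x^8/28 - x/7 + 1/8)) := by
  have habs : Continuous fun y : ℝ => |y - x| * (c0 + c1*y + c2*y^2 + c3*y^3 + c4*y^4 + c5*y^5 + c6*y^6) :=
    ((continuous_id.sub continuous_const).abs).mul (by continuity)
  have e : ∫ y in (0:ℝ)..1, (2 - 3*|y - x| - 6*x*(1 - x)) * (c0 + c1*y + c2*y^2 + c3*y^3 + c4*y^4 + c5*y^5 + c6*y^6)
      = (∫ y in (0:ℝ)..1, ((2 - 6*x*(1-x))*c0 + (2 - 6*x*(1-x))*c1*y + (2 - 6*x*(1-x))*c2*y^2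
          + (2 - 6*x*(1-x))*c3*y^3 + (2 - 6*x*(1-x))*c4*y^4 + (2 - 6*x*(1-x))*c5*y^5
          + (2 - 6*x*(1-x))*c6*y^6 + (0:ℝ)*y^7 + (0:ℝ)*y^8))
        - 3 * ∫ y in (0:ℝ)..1, |y - x| * (c0 + c1*y + c2*y^2 + c3*y^3 + c4*y^4 + c5*y^5 + c6*y^6) := by
    rw [← intervalIntegral.integral_const_mul,
      ← intervalIntegral.integral_sub (Continuous.intervalIntegrable (by continuity) 0 1)
        ((Continuous.intervalIntegrable (u := fun y => 3 * (|y - x| * (c0 + c1*y + c2*y^2 + c3*y^3 + c4*y^4 + c5*y^5 + c6*y^6))) (continuous_const.mul habs) 0 1))]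
    apply intervalIntegral.integral_congr
    intro y hy
    dsimp only
    ring
  rw [e, poly_int, abs_poly_int x c0 c1 c2 c3 c4 c5 c6 h0 h1]
  ring

lemma step4 (x : ℝ) (h0 : 0 ≤ x) (h1 : x ≤ 1) :
    ∫ y in (0:ℝ)..1, (2 - 3*|y - x| - 6*x*(1 - x)) = 1/2 - 3*x + 3*x^2 := by
  have e : ∫ y in (0:ℝ)..1, (2 - 3*|y - x| - 6*x*(1 - x))
      = ∫ y in (0:ℝ)..1, (2 - 3*|y - x| - 6*x*(1 - x)) * ((1:ℝ) + 0*y + 0*y^2 + 0*y^3 + 0*y^4 + 0*y^5 + 0*y^6) := by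
    apply intervalIntegral.integral_congr; intro y hy; dsimp only; ring
  rw [e, Wstep x 1 0 0 0 0 0 0 h0 h1]; ring

lemma step3 (x : ℝ) (h0 : 0 ≤ x) (h1 : x ≤ 1) :
    ∫ y in (0:ℝ)..1, (2 - 3*|y - x| - 6*x*(1 - x)) * (1/2 - 3*y + 3*y^2)
      = -(3/2)*x^2 + 3*x^3 - (3/2)*x^4 := by
  have e : ∫ y in (0:ℝ)..1, (2 - 3*|y - x| - 6*x*(1 - x)) * (1/2 - 3*y + 3*y^2)
      = ∫ y in (0:ℝ)..1, (2 - 3*|y - x| - 6*x*(1 - x)) * ((1/2:ℝ) + (-3)*y + 3*y^2 + 0*y^3 + 0*y^4 + 0*y^5 + 0*y^6) := by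
    apply intervalIntegral.integral_congr; intro y hy; dsimp only; ring
  rw [e, Wstep x (1/2) (-3) 3 0 0 0 0 h0 h1]; ring

lemma step2 (x : ℝ) (h0 : 0 ≤ x) (h1 : x ≤ 1) :
    ∫ y in (0:ℝ)..1, (2 - 3*|y - x| - 6*x*(1 - x)) * (-(3/2)*y^2 + 3*y^3 - (3/2)*y^4)
      = -1/40 + (3/20)*x - (3/10)*x^2 + (3/4)*x^4 - (9/10)*x^5 + (3/10)*x^6 := by
  have e : ∫ y in (0:ℝ)..1, (2 - 3*|y - x| - 6*x*(1 - x)) * (-(3/2)*y^2 + 3*y^3 - (3/2)*y^4)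
      = ∫ y in (0:ℝ)..1, (2 - 3*|y - x| - 6*x*(1 - x)) * ((0:ℝ) + 0*y + (-(3/2))*y^2 + 3*y^3 + (-(3/2))*y^4 + 0*y^5 + 0*y^6) := by
    apply intervalIntegral.integral_congr; intro y hy; dsimp only; ring
  rw [e, Wstep x 0 0 (-(3/2)) 3 (-(3/2)) 0 0 h0 h1]; ring

lemma step1 (x : ℝ) (h0 : 0 ≤ x) (h1 : x ≤ 1) :
    ∫ y in (0:ℝ)..1, (2 - 3*|y - x| - 6*x*(1 - x))
        * (-1/40 + (3/20)*y - (3/10)*y^2 + (3/4)*y^4 - (9/10)*y^5 + (3/10)*y^6)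
      = -1/280 + (3/140)*x + (9/280)*x^2 - (3/20)*x^3 + (3/20)*x^4 - (3/20)*x^6 + (9/70)*x^7 - (9/280)*x^8 := by
  have e : ∫ y in (0:ℝ)..1, (2 - 3*|y - x| - 6*x*(1 - x))
        * (-1/40 + (3/20)*y - (3/10)*y^2 + (3/4)*y^4 - (9/10)*y^5 + (3/10)*y^6)
      = ∫ y in (0:ℝ)..1, (2 - 3*|y - x| - 6*x*(1 - x))
        * ((-1/40:ℝ) + (3/20)*y + (-(3/10))*y^2 + 0*y^3 + (3/4)*y^4 + (-(9/10))*y^5 + (3/10)*y^6) := by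
    apply intervalIntegral.integral_congr; intro y hy; dsimp only; ring
  rw [e, Wstep x (-1/40) (3/20) (-(3/10)) 0 (3/4) (-(9/10)) (3/10) h0 h1]; ring

lemma step0 :
    ∫ x in (0:ℝ)..1, (-1/280 + (3/140)*x + (9/280)*x^2 - (3/20)*x^3 + (3/20)*x^4 - (3/20)*x^6 + (9/70)*x^7 - (9/280)*x^8)
      = 1/700 := by
  have e : ∫ x in (0:ℝ)..1, (-1/280 + (3/140)*x + (9/280)*x^2 - (3/20)*x^3 + (3/20)*x^4 - (3/20)*x^6 + (9/70)*x^7 - (9/280)*x^8)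
      = ∫ x in (0:ℝ)..1, ((-1/280:ℝ) + (3/140)*x + (9/280)*x^2 + (-(3/20))*x^3 + (3/20)*x^4 + 0*x^5 + (-(3/20))*x^6 + (9/70)*x^7 + (-(9/280))*x^8) := by
    apply intervalIntegral.integral_congr; intro y hy; dsimp only; ring
  rw [e, poly_int]; norm_num

lemma reduction {Ω : Type*} [MeasurableSpace Ω] (P : Measure Ω) [IsProbabilityMeasure P]
    {α : Type*} [MeasurableSpace α]
    (X : Ω → α) (Y : Ω → ℝ) (hX : Measurable X) (hY : Measurable Y)
    (hind : IndepFun X Y P) (hlaw : P.map Y = volume.restrict (Set.Icc (0:ℝ) 1))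
    (s : Set α) (hs : MeasurableSet s) (hXs : ∀ ω, X ω ∈ s)
    (F : α → ℝ → ℝ) (hF : Measurable (Function.uncurry F))
    (C : ℝ) (hC : ∀ x ∈ s, ∀ y ∈ Set.Icc (0:ℝ) 1, |F x y| ≤ C) :
    ∫ ω, F (X ω) (Y ω) ∂P = ∫ ω, (∫ y in Set.Icc (0:ℝ) 1, F (X ω) y) ∂P := by
  set ν : Measure ℝ := volume.restrict (Set.Icc (0:ℝ) 1) with hν
  have hνprob : IsProbabilityMeasure ν := by
    constructor
    rw [hν, Measure.restrict_apply_univ, Real.volume_Icc]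
    norm_num
  have hmap : P.map (fun ω => (X ω, Y ω)) = (P.map X).prod ν := by
    rw [← hlaw]
    exact (indepFun_iff_map_prod_eq_prod_map_map hX.aemeasurable hY.aemeasurable).mp hind
  have hXprob : IsProbabilityMeasure (P.map X) := Measure.isProbabilityMeasure_map hX.aemeasurable
  have hXs' : (P.map X) sᶜ = 0 := by
    rw [Measure.map_apply hX hs.compl]
    have : X ⁻¹' sᶜ = ∅ := by
      ext ω; simp [hXs ω]
    simp [this]
  have hae : ∀ᵐ p ∂((P.map X).prod ν), p.1 ∈ s ∧ p.2 ∈ Set.Icc (0:ℝ) 1 := by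
    have h1 : ((P.map X).prod ν) (sᶜ ×ˢ (Set.univ : Set ℝ)) = 0 := by
      rw [Measure.prod_prod, hXs']; simp
    have h2 : ((P.map X).prod ν) ((Set.univ : Set α) ×ˢ (Set.Icc (0:ℝ) 1)ᶜ) = 0 := by
      rw [Measure.prod_prod]
      have : ν (Set.Icc (0:ℝ) 1)ᶜ = 0 := by
        rw [hν, Measure.restrict_apply measurableSet_Icc.compl]
        simp
      rw [this]; simp
    rw [ae_iff]
    refine measure_mono_null ?_ (measure_union_null h1 h2)
    intro p hp
    simp only [Set.mem_setOf_eq, not_and_or] at hp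
    rcases hp with hp | hp
    · exact Or.inl (by simp [hp])
    · exact Or.inr (by simp [hp])
  have hint : Integrable (Function.uncurry F) ((P.map X).prod ν) := by
    refine Integrable.mono' (integrable_const C) hF.aestronglyMeasurable ?_
    filter_upwards [hae] with p hp
    rw [Real.norm_eq_abs]
    exact hC p.1 hp.1 p.2 hp.2
  calc ∫ ω, F (X ω) (Y ω) ∂P
      = ∫ p, Function.uncurry F p ∂(P.map (fun ω => (X ω, Y ω))) := by
        rw [integral_map (hX.aemeasurable.prodMk hY.aemeasurable) hF.aestronglyMeasurable]
        rfl
    _ = ∫ p, Function.uncurry F p ∂((P.map X).prod ν) := by rw [hmap]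
    _ = ∫ x, (∫ y, F x y ∂ν) ∂(P.map X) := integral_prod _ hint
    _ = ∫ ω, (∫ y, F (X ω) y ∂ν) ∂P := by
        rw [integral_map hX.aemeasurable]
        exact (hF.stronglyMeasurable.integral_prod_right).aestronglyMeasurable

lemma pow_bounds01 {y : ℝ} (h0 : 0 ≤ y) (h1 : y ≤ 1) (k : ℕ) : 0 ≤ y^k ∧ y^k ≤ 1 :=
  ⟨pow_nonneg h0 k, pow_le_one₀ h0 h1⟩

lemma Wb {x y : ℝ} (hx0 : 0 ≤ x) (hx1 : x ≤ 1) (hy0 : 0 ≤ y) (hy1 : y ≤ 1) :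
    |2 - 3 * |y - x| - 6 * x * (1 - x)| ≤ 7 := by
  have h1 : |y - x| ≤ 1 := abs_le.mpr ⟨by linarith, by linarith⟩
  have h2 : 0 ≤ |y - x| := abs_nonneg _
  rw [abs_le]
  constructor <;> nlinarith

lemma g4b {y : ℝ} (h0 : 0 ≤ y) (h1 : y ≤ 1) : |1/2 - 3*y + 3*y^2| ≤ 7 := by
  obtain ⟨a2, b2⟩ := pow_bounds01 h0 h1 2
  rw [abs_le]; constructor <;> linarith

lemma g3b {y : ℝ} (h0 : 0 ≤ y) (h1 : y ≤ 1) : |-(3/2)*y^2 + 3*y^3 - (3/2)*y^4| ≤ 7 := by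
  obtain ⟨a2, b2⟩ := pow_bounds01 h0 h1 2
  obtain ⟨a3, b3⟩ := pow_bounds01 h0 h1 3
  obtain ⟨a4, b4⟩ := pow_bounds01 h0 h1 4
  rw [abs_le]; constructor <;> linarith

lemma g2b {y : ℝ} (h0 : 0 ≤ y) (h1 : y ≤ 1) :
    |-1/40 + (3/20)*y - (3/10)*y^2 + (3/4)*y^4 - (9/10)*y^5 + (3/10)*y^6| ≤ 7 := by
  obtain ⟨a2, b2⟩ := pow_bounds01 h0 h1 2
  obtain ⟨a4, b4⟩ := pow_bounds01 h0 h1 4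
  obtain ⟨a5, b5⟩ := pow_bounds01 h0 h1 5
  obtain ⟨a6, b6⟩ := pow_bounds01 h0 h1 6
  rw [abs_le]; constructor <;> linarith

/-- If `U 0, ..., U 4` are i.i.d. uniform on `[0,1]` and
`Wᵢ = 2 - 3|U (i+1) - U i| - 6 U i (1 - U i)` for `i = 0, ..., 3`,
then `E[W₁ W₂ W₃ W₄] = 1/700`. -/
theorem expectation_W1_W2_W3_W4
    {Ω : Type*} [MeasurableSpace Ω] (P : Measure Ω) [IsProbabilityMeasure P]
    (U : Fin 5 → Ω → ℝ) (hmeas : ∀ i, Measurable (U i))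
    (hindep : iIndepFun U P)
    (hunif : ∀ i, Measure.map (U i) P = volume.restrict (Set.Icc (0:ℝ) 1)) :
    ∫ ω, (2 - 3 * |U 1 ω - U 0 ω| - 6 * U 0 ω * (1 - U 0 ω))
        * (2 - 3 * |U 2 ω - U 1 ω| - 6 * U 1 ω * (1 - U 1 ω))
        * (2 - 3 * |U 3 ω - U 2 ω| - 6 * U 2 ω * (1 - U 2 ω))
        * (2 - 3 * |U 4 ω - U 3 ω| - 6 * U 3 ω * (1 - U 3 ω)) ∂P = 1 / 700 := by
  classical
  -- clamp to [0,1]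
  set c : ℝ → ℝ := fun t => max 0 (min 1 t) with hc_def
  have hc : Measurable c := measurable_const.max (measurable_const.min measurable_id)
  have hc_mem : ∀ t, c t ∈ Set.Icc (0:ℝ) 1 :=
    fun t => ⟨le_max_left _ _, max_le (by norm_num) (min_le_left _ _)⟩
  have hc_id : ∀ t ∈ Set.Icc (0:ℝ) 1, c t = t := by
    intro t ht
    rw [hc_def]
    dsimp only
    rw [min_eq_right ht.2, max_eq_right ht.1]
  set V : Fin 5 → Ω → ℝ := fun i ω => c (U i ω) with hV_def
  have hVmeas : ∀ i, Measurable (V i) := fun i => hc.comp (hmeas i)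
  have hVmem : ∀ (i : Fin 5) ω, V i ω ∈ Set.Icc (0:ℝ) 1 := fun i ω => hc_mem _
  have hVindep : iIndepFun V P :=
    hindep.comp (fun _ => c) (fun _ => hc)
  have hνc : Measure.map c (volume.restrict (Set.Icc (0:ℝ) 1)) = volume.restrict (Set.Icc (0:ℝ) 1) := by
    have h : c =ᵐ[volume.restrict (Set.Icc (0:ℝ) 1)] id := by
      filter_upwards [ae_restrict_mem measurableSet_Icc] with t ht
      exact hc_id t ht
    rw [Measure.map_congr h, Measure.map_id]
  have hVlaw : ∀ i, P.map (V i) = volume.restrict (Set.Icc (0:ℝ) 1) := by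
    intro i
    have h : V i = c ∘ U i := rfl
    rw [h, ← Measure.map_map hc (hmeas i), hunif i, hνc]
  have hUae : ∀ i, ∀ᵐ ω ∂P, V i ω = U i ω := by
    intro i
    have hnull : P {ω | ¬ U i ω ∈ Set.Icc (0:ℝ) 1} = 0 := by
      have h : {ω | ¬ U i ω ∈ Set.Icc (0:ℝ) 1} = U i ⁻¹' (Set.Icc (0:ℝ) 1)ᶜ := rfl
      rw [h, ← Measure.map_apply (hmeas i) measurableSet_Icc.compl, hunif i,
        Measure.restrict_apply measurableSet_Icc.compl]
      simp
    have hmem : ∀ᵐ ω ∂P, U i ω ∈ Set.Icc (0:ℝ) 1 := by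
      rw [ae_iff]; exact hnull
    filter_upwards [hmem] with ω hω
    exact hc_id _ hω
  -- bridge between set integrals over Icc and interval integrals
  have hbridge : ∀ f : ℝ → ℝ, ∫ y in Set.Icc (0:ℝ) 1, f y = ∫ y in (0:ℝ)..1, f y := by
    intro f
    rw [intervalIntegral.integral_of_le zero_le_one, integral_Icc_eq_integral_Ioc]
  -- independence instances
  have hind4 : IndepFun (fun ω => (V 0 ω, V 1 ω, V 2 ω, V 3 ω)) (V 4) P := by
    have h := hVindep.indepFun_finset ({0,1,2,3} : Finset (Fin 5)) ({4} : Finset (Fin 5))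
      (by decide) hVmeas
    exact h.comp (_mγ := inferInstance) (_mγ' := inferInstance) (φ := fun v => (v ⟨0, by decide⟩, v ⟨1, by decide⟩, v ⟨2, by decide⟩, v ⟨3, by decide⟩))
      (ψ := fun v => v ⟨4, by decide⟩)
      (((measurable_pi_apply _).prodMk ((measurable_pi_apply _).prodMk
        ((measurable_pi_apply _).prodMk (measurable_pi_apply _)))))
      (measurable_pi_apply _)
  have hind3 : IndepFun (fun ω => (V 0 ω, V 1 ω, V 2 ω)) (V 3) P := by
    have h := hVindep.indepFun_finset ({0,1,2} : Finset (Fin 5)) ({3} : Finset (Fin 5))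
      (by decide) hVmeas
    exact h.comp (_mγ := inferInstance) (_mγ' := inferInstance) (φ := fun v => (v ⟨0, by decide⟩, v ⟨1, by decide⟩, v ⟨2, by decide⟩))
      (ψ := fun v => v ⟨3, by decide⟩)
      (((measurable_pi_apply _).prodMk ((measurable_pi_apply _).prodMk
        (measurable_pi_apply _))))
      (measurable_pi_apply _)
  have hind2 : IndepFun (fun ω => (V 0 ω, V 1 ω)) (V 2) P := by
    have h := hVindep.indepFun_finset ({0,1} : Finset (Fin 5)) ({2} : Finset (Fin 5))
      (by decide) hVmeas
    exact h.comp (_mγ := inferInstance) (_mγ' := inferInstance) (φ := fun v => (v ⟨0, by decide⟩, v ⟨1, by decide⟩))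
      (ψ := fun v => v ⟨2, by decide⟩)
      ((measurable_pi_apply _).prodMk (measurable_pi_apply _))
      (measurable_pi_apply _)
  have hind1 : IndepFun (V 0) (V 1) P := hVindep.indepFun (by decide)
  -- the key computation with clamped variables
  have key : ∫ ω, (2 - 3 * |V 1 ω - V 0 ω| - 6 * V 0 ω * (1 - V 0 ω))
      * (2 - 3 * |V 2 ω - V 1 ω| - 6 * V 1 ω * (1 - V 1 ω))
      * (2 - 3 * |V 3 ω - V 2 ω| - 6 * V 2 ω * (1 - V 2 ω))
      * (2 - 3 * |V 4 ω - V 3 ω| - 6 * V 3 ω * (1 - V 3 ω)) ∂P = 1 / 700 := by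
    have eqA : ∫ ω, (2 - 3 * |V 1 ω - V 0 ω| - 6 * V 0 ω * (1 - V 0 ω))
        * (2 - 3 * |V 2 ω - V 1 ω| - 6 * V 1 ω * (1 - V 1 ω))
        * (2 - 3 * |V 3 ω - V 2 ω| - 6 * V 2 ω * (1 - V 2 ω))
        * (2 - 3 * |V 4 ω - V 3 ω| - 6 * V 3 ω * (1 - V 3 ω)) ∂P
        = ∫ ω, (∫ y in Set.Icc (0:ℝ) 1, (2 - 3 * |V 1 ω - V 0 ω| - 6 * V 0 ω * (1 - V 0 ω))
          * (2 - 3 * |V 2 ω - V 1 ω| - 6 * V 1 ω * (1 - V 1 ω))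
          * (2 - 3 * |V 3 ω - V 2 ω| - 6 * V 2 ω * (1 - V 2 ω))
          * (2 - 3 * |y - V 3 ω| - 6 * V 3 ω * (1 - V 3 ω))) ∂P := by
      exact reduction P (fun ω => (V 0 ω, V 1 ω, V 2 ω, V 3 ω)) (V 4)
        (by fun_prop) (hVmeas 4) hind4 (hVlaw 4)
        (Set.Icc 0 1 ×ˢ Set.Icc 0 1 ×ˢ Set.Icc 0 1 ×ˢ Set.Icc 0 1)
        (measurableSet_Icc.prod (measurableSet_Icc.prod (measurableSet_Icc.prod measurableSet_Icc)))
        (fun ω => ⟨hVmem 0 ω, hVmem 1 ω, hVmem 2 ω, hVmem 3 ω⟩)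
        (fun p y => (2 - 3 * |p.2.1 - p.1| - 6 * p.1 * (1 - p.1))
          * (2 - 3 * |p.2.2.1 - p.2.1| - 6 * p.2.1 * (1 - p.2.1))
          * (2 - 3 * |p.2.2.2 - p.2.2.1| - 6 * p.2.2.1 * (1 - p.2.2.1))
          * (2 - 3 * |y - p.2.2.2| - 6 * p.2.2.2 * (1 - p.2.2.2)))
        (by fun_prop) 2401
        (by
          rintro p ⟨hp0, hp1, hp2, hp3⟩ y hy
          rw [show (2401:ℝ) = 7*7*7*7 by norm_num, abs_mul, abs_mul, abs_mul]
          gcongr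
          · exact Wb hp0.1 hp0.2 hp1.1 hp1.2
          · exact Wb hp1.1 hp1.2 hp2.1 hp2.2
          · exact Wb hp2.1 hp2.2 hp3.1 hp3.2
          · exact Wb hp3.1 hp3.2 hy.1 hy.2)
    have eqA2 : ∀ ω : Ω, (∫ y in Set.Icc (0:ℝ) 1, (2 - 3 * |V 1 ω - V 0 ω| - 6 * V 0 ω * (1 - V 0 ω))
          * (2 - 3 * |V 2 ω - V 1 ω| - 6 * V 1 ω * (1 - V 1 ω))
          * (2 - 3 * |V 3 ω - V 2 ω| - 6 * V 2 ω * (1 - V 2 ω))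
          * (2 - 3 * |y - V 3 ω| - 6 * V 3 ω * (1 - V 3 ω)))
        = (2 - 3 * |V 1 ω - V 0 ω| - 6 * V 0 ω * (1 - V 0 ω))
          * (2 - 3 * |V 2 ω - V 1 ω| - 6 * V 1 ω * (1 - V 1 ω))
          * (2 - 3 * |V 3 ω - V 2 ω| - 6 * V 2 ω * (1 - V 2 ω))
          * (1/2 - 3*(V 3 ω) + 3*(V 3 ω)^2) := by
      intro ω
      rw [integral_const_mul, hbridge, step4 (V 3 ω) (hVmem 3 ω).1 (hVmem 3 ω).2]
    rw [eqA]
    simp only [eqA2]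
    -- integrate out V 3
    have eqB : ∫ ω, (2 - 3 * |V 1 ω - V 0 ω| - 6 * V 0 ω * (1 - V 0 ω))
          * (2 - 3 * |V 2 ω - V 1 ω| - 6 * V 1 ω * (1 - V 1 ω))
          * (2 - 3 * |V 3 ω - V 2 ω| - 6 * V 2 ω * (1 - V 2 ω))
          * (1/2 - 3*(V 3 ω) + 3*(V 3 ω)^2) ∂P
        = ∫ ω, (∫ y in Set.Icc (0:ℝ) 1, (2 - 3 * |V 1 ω - V 0 ω| - 6 * V 0 ω * (1 - V 0 ω))
          * (2 - 3 * |V 2 ω - V 1 ω| - 6 * V 1 ω * (1 - V 1 ω))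
          * (2 - 3 * |y - V 2 ω| - 6 * V 2 ω * (1 - V 2 ω))
          * (1/2 - 3*y + 3*y^2)) ∂P := by
      exact reduction P (fun ω => (V 0 ω, V 1 ω, V 2 ω)) (V 3)
        (by fun_prop) (hVmeas 3) hind3 (hVlaw 3)
        (Set.Icc 0 1 ×ˢ Set.Icc 0 1 ×ˢ Set.Icc 0 1)
        (measurableSet_Icc.prod (measurableSet_Icc.prod measurableSet_Icc))
        (fun ω => ⟨hVmem 0 ω, hVmem 1 ω, hVmem 2 ω⟩)
        (fun p y => (2 - 3 * |p.2.1 - p.1| - 6 * p.1 * (1 - p.1))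
          * (2 - 3 * |p.2.2 - p.2.1| - 6 * p.2.1 * (1 - p.2.1))
          * (2 - 3 * |y - p.2.2| - 6 * p.2.2 * (1 - p.2.2))
          * (1/2 - 3*y + 3*y^2))
        (by fun_prop) 2401
        (by
          rintro p ⟨hp0, hp1, hp2⟩ y hy
          rw [show (2401:ℝ) = 7*7*7*7 by norm_num, abs_mul, abs_mul, abs_mul]
          gcongr
          · exact Wb hp0.1 hp0.2 hp1.1 hp1.2
          · exact Wb hp1.1 hp1.2 hp2.1 hp2.2
          · exact Wb hp2.1 hp2.2 hy.1 hy.2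
          · exact g4b hy.1 hy.2)
    have eqB2 : ∀ ω : Ω, (∫ y in Set.Icc (0:ℝ) 1, (2 - 3 * |V 1 ω - V 0 ω| - 6 * V 0 ω * (1 - V 0 ω))
          * (2 - 3 * |V 2 ω - V 1 ω| - 6 * V 1 ω * (1 - V 1 ω))
          * (2 - 3 * |y - V 2 ω| - 6 * V 2 ω * (1 - V 2 ω))
          * (1/2 - 3*y + 3*y^2))
        = (2 - 3 * |V 1 ω - V 0 ω| - 6 * V 0 ω * (1 - V 0 ω))
          * (2 - 3 * |V 2 ω - V 1 ω| - 6 * V 1 ω * (1 - V 1 ω))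
          * (-(3/2)*(V 2 ω)^2 + 3*(V 2 ω)^3 - (3/2)*(V 2 ω)^4) := by
      intro ω
      have e0 : ∫ y in Set.Icc (0:ℝ) 1, (2 - 3 * |V 1 ω - V 0 ω| - 6 * V 0 ω * (1 - V 0 ω))
          * (2 - 3 * |V 2 ω - V 1 ω| - 6 * V 1 ω * (1 - V 1 ω))
          * (2 - 3 * |y - V 2 ω| - 6 * V 2 ω * (1 - V 2 ω))
          * (1/2 - 3*y + 3*y^2)
          = ∫ y in Set.Icc (0:ℝ) 1, ((2 - 3 * |V 1 ω - V 0 ω| - 6 * V 0 ω * (1 - V 0 ω))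
          * (2 - 3 * |V 2 ω - V 1 ω| - 6 * V 1 ω * (1 - V 1 ω)))
          * ((2 - 3 * |y - V 2 ω| - 6 * V 2 ω * (1 - V 2 ω))
          * (1/2 - 3*y + 3*y^2)) :=
        integral_congr_ae (Filter.Eventually.of_forall fun y => by ring)
      rw [e0, integral_const_mul, hbridge,
        step3 (V 2 ω) (hVmem 2 ω).1 (hVmem 2 ω).2]
    rw [eqB]
    simp only [eqB2]
    -- integrate out V 2
    have eqC : ∫ ω, (2 - 3 * |V 1 ω - V 0 ω| - 6 * V 0 ω * (1 - V 0 ω))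
          * (2 - 3 * |V 2 ω - V 1 ω| - 6 * V 1 ω * (1 - V 1 ω))
          * (-(3/2)*(V 2 ω)^2 + 3*(V 2 ω)^3 - (3/2)*(V 2 ω)^4) ∂P
        = ∫ ω, (∫ y in Set.Icc (0:ℝ) 1, (2 - 3 * |V 1 ω - V 0 ω| - 6 * V 0 ω * (1 - V 0 ω))
          * (2 - 3 * |y - V 1 ω| - 6 * V 1 ω * (1 - V 1 ω))
          * (-(3/2)*y^2 + 3*y^3 - (3/2)*y^4)) ∂P := by
      exact reduction P (fun ω => (V 0 ω, V 1 ω)) (V 2)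
        (by fun_prop) (hVmeas 2) hind2 (hVlaw 2)
        (Set.Icc 0 1 ×ˢ Set.Icc 0 1)
        (measurableSet_Icc.prod measurableSet_Icc)
        (fun ω => ⟨hVmem 0 ω, hVmem 1 ω⟩)
        (fun p y => (2 - 3 * |p.2 - p.1| - 6 * p.1 * (1 - p.1))
          * (2 - 3 * |y - p.2| - 6 * p.2 * (1 - p.2))
          * (-(3/2)*y^2 + 3*y^3 - (3/2)*y^4))
        (by fun_prop) 343
        (by
          rintro p ⟨hp0, hp1⟩ y hy
          rw [show (343:ℝ) = 7*7*7 by norm_num, abs_mul, abs_mul]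
          gcongr
          · exact Wb hp0.1 hp0.2 hp1.1 hp1.2
          · exact Wb hp1.1 hp1.2 hy.1 hy.2
          · exact g3b hy.1 hy.2)
    have eqC2 : ∀ ω : Ω, (∫ y in Set.Icc (0:ℝ) 1, (2 - 3 * |V 1 ω - V 0 ω| - 6 * V 0 ω * (1 - V 0 ω))
          * (2 - 3 * |y - V 1 ω| - 6 * V 1 ω * (1 - V 1 ω))
          * (-(3/2)*y^2 + 3*y^3 - (3/2)*y^4))
        = (2 - 3 * |V 1 ω - V 0 ω| - 6 * V 0 ω * (1 - V 0 ω))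
          * (-1/40 + (3/20)*(V 1 ω) - (3/10)*(V 1 ω)^2 + (3/4)*(V 1 ω)^4 - (9/10)*(V 1 ω)^5 + (3/10)*(V 1 ω)^6) := by
      intro ω
      have e0 : ∫ y in Set.Icc (0:ℝ) 1, (2 - 3 * |V 1 ω - V 0 ω| - 6 * V 0 ω * (1 - V 0 ω))
          * (2 - 3 * |y - V 1 ω| - 6 * V 1 ω * (1 - V 1 ω))
          * (-(3/2)*y^2 + 3*y^3 - (3/2)*y^4)
          = ∫ y in Set.Icc (0:ℝ) 1, (2 - 3 * |V 1 ω - V 0 ω| - 6 * V 0 ω * (1 - V 0 ω))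
          * ((2 - 3 * |y - V 1 ω| - 6 * V 1 ω * (1 - V 1 ω))
          * (-(3/2)*y^2 + 3*y^3 - (3/2)*y^4)) :=
        integral_congr_ae (Filter.Eventually.of_forall fun y => by ring)
      rw [e0, integral_const_mul, hbridge,
        step2 (V 1 ω) (hVmem 1 ω).1 (hVmem 1 ω).2]
    rw [eqC]
    simp only [eqC2]
    -- integrate out V 1
    have eqD : ∫ ω, (2 - 3 * |V 1 ω - V 0 ω| - 6 * V 0 ω * (1 - V 0 ω))
          * (-1/40 + (3/20)*(V 1 ω) - (3/10)*(V 1 ω)^2 + (3/4)*(V 1 ω)^4 - (9/10)*(V 1 ω)^5 + (3/10)*(V 1 ω)^6) ∂P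
        = ∫ ω, (∫ y in Set.Icc (0:ℝ) 1, (2 - 3 * |y - V 0 ω| - 6 * V 0 ω * (1 - V 0 ω))
          * (-1/40 + (3/20)*y - (3/10)*y^2 + (3/4)*y^4 - (9/10)*y^5 + (3/10)*y^6)) ∂P := by
      exact reduction P (V 0) (V 1)
        (hVmeas 0) (hVmeas 1) hind1 (hVlaw 1)
        (Set.Icc 0 1) measurableSet_Icc (fun ω => hVmem 0 ω)
        (fun x y => (2 - 3 * |y - x| - 6 * x * (1 - x))
          * (-1/40 + (3/20)*y - (3/10)*y^2 + (3/4)*y^4 - (9/10)*y^5 + (3/10)*y^6))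
        (by fun_prop) 49
        (by
          rintro x hx y hy
          rw [show (49:ℝ) = 7*7 by norm_num, abs_mul]
          gcongr
          · exact Wb hx.1 hx.2 hy.1 hy.2
          · exact g2b hy.1 hy.2)
    have eqD2 : ∀ ω : Ω, (∫ y in Set.Icc (0:ℝ) 1, (2 - 3 * |y - V 0 ω| - 6 * V 0 ω * (1 - V 0 ω))
          * (-1/40 + (3/20)*y - (3/10)*y^2 + (3/4)*y^4 - (9/10)*y^5 + (3/10)*y^6))
        = -1/280 + (3/140)*(V 0 ω) + (9/280)*(V 0 ω)^2 - (3/20)*(V 0 ω)^3 + (3/20)*(V 0 ω)^4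
          - (3/20)*(V 0 ω)^6 + (9/70)*(V 0 ω)^7 - (9/280)*(V 0 ω)^8 := by
      intro ω
      rw [hbridge]
      exact step1 (V 0 ω) (hVmem 0 ω).1 (hVmem 0 ω).2
    rw [eqD]
    simp only [eqD2]
    -- integrate out V 0
    have hg1cont : Continuous (fun x : ℝ => -1/280 + (3/140)*x + (9/280)*x^2 - (3/20)*x^3 + (3/20)*x^4
        - (3/20)*x^6 + (9/70)*x^7 - (9/280)*x^8) := by fun_prop
    calc ∫ ω, (-1/280 + (3/140)*(V 0 ω) + (9/280)*(V 0 ω)^2 - (3/20)*(V 0 ω)^3 + (3/20)*(V 0 ω)^4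
          - (3/20)*(V 0 ω)^6 + (9/70)*(V 0 ω)^7 - (9/280)*(V 0 ω)^8) ∂P
        = ∫ x, (-1/280 + (3/140)*x + (9/280)*x^2 - (3/20)*x^3 + (3/20)*x^4
          - (3/20)*x^6 + (9/70)*x^7 - (9/280)*x^8) ∂(P.map (V 0)) := by
          rw [integral_map (hVmeas 0).aemeasurable hg1cont.aestronglyMeasurable]
      _ = ∫ x in Set.Icc (0:ℝ) 1, (-1/280 + (3/140)*x + (9/280)*x^2 - (3/20)*x^3 + (3/20)*x^4
          - (3/20)*x^6 + (9/70)*x^7 - (9/280)*x^8) := by rw [hVlaw 0]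
      _ = 1/700 := by rw [hbridge]; exact step0
  rw [← key]
  apply integral_congr_ae
  filter_upwards [hUae 0, hUae 1, hUae 2, hUae 3, hUae 4] with ω h0 h1 h2 h3 h4
  rw [h0, h1, h2, h3, h4]
end

section
/- (DKW-type inequality for 1-dependent sequences) Let X_1, ..., X_n be identically distributed random variables in ℝ^k forming a 1-dependent sequence (i.e., (X_i)_{i∈S} and (X_j)_{j∈T} are independent whenever |i - j| ≥ 2 for all i ∈ S, j ∈ T), with common cdf F, and let F_n denote their empirical cdf. Suppose the multivariate DKW inequality holds for i.i.d. samples with constants c_k, c_k'. Then for all ε > 0, P(sup_{t ∈ ℝ^k} |F_n(t) − F(t)| ≥ ε) ≤ 2 c_k exp(−c_k' n ε²/2). -/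
open MeasureTheory ProbabilityTheory

/-- The (population) cdf `F(t) = P(ξ ≤ t)` of a random vector `ξ` in `ℝ^k`. -/
noncomputable def trueCdf {Ω : Type*} [MeasurableSpace Ω] (P : Measure Ω) {k : ℕ}
    (ξ : Ω → Fin k → ℝ) (t : Fin k → ℝ) : ℝ :=
  (P {ω | ∀ d, ξ ω d ≤ t d}).toReal

/-- The Kolmogorov–Smirnov distance `sup_t |F_m(t) - F(t)|` between the empirical cdf
of the sample `Y 0, ..., Y (m-1)` and the cdf of `ξ₀`. -/
noncomputable def ksDist {Ω : Type*} [MeasurableSpace Ω] (P : Measure Ω) {k : ℕ}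
    (Y : ℕ → Ω → Fin k → ℝ) (m : ℕ) (ξ₀ : Ω → Fin k → ℝ) (ω : Ω) : ℝ :=
  ⨆ t : Fin k → ℝ,
    |(m : ℝ)⁻¹ * ∑ i ∈ Finset.range m,
        Set.indicator {ω' | ∀ d, Y i ω' d ≤ t d} (fun _ => (1 : ℝ)) ω
      - trueCdf P ξ₀ t|

/-- Splitting a sum over `range n` into even- and odd-indexed parts. -/
lemma sum_range_even_odd {M : Type*} [AddCommMonoid M] (f : ℕ → M) (n : ℕ) :
    ∑ i ∈ Finset.range n, f i
      = (∑ i ∈ Finset.range ((n + 1) / 2), f (2 * i))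
        + ∑ i ∈ Finset.range (n / 2), f (2 * i + 1) := by
  induction n with
  | zero => simp
  | succ n ih =>
    rw [Finset.sum_range_succ, ih]
    rcases Nat.even_or_odd n with ⟨j, rfl⟩ | ⟨j, rfl⟩
    · have e1 : (j + j + 1 + 1) / 2 = j + 1 := by omega
      have e2 : (j + j + 1) / 2 = j := by omega
      have e3 : (j + j) / 2 = j := by omega
      rw [e1, e2, e3, Finset.sum_range_succ]
      have e4 : 2 * j = j + j := by ring
      rw [e4]
      abel
    · have e1 : (2 * j + 1 + 1 + 1) / 2 = j + 1 := by omega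
      have e2 : (2 * j + 1 + 1) / 2 = j + 1 := by omega
      have e3 : (2 * j + 1 + 1) / 2 = j + 1 := by omega
      have e4 : (2 * j + 1) / 2 = j := by omega
      rw [e1, e2, e4, Finset.sum_range_succ, Finset.sum_range_succ]
      abel

/-- A subsequence with gaps `≥ 2` of a 1-dependent sequence is i.i.d. (independence part). -/
lemma iIndep_of_one_dependent {Ω : Type*} [MeasurableSpace Ω] (P : Measure Ω)
    [IsProbabilityMeasure P] {k : ℕ} (X : ℕ → Ω → Fin k → ℝ)
    (h1dep : ∀ S T : Finset ℕ,
      (∀ i ∈ S, ∀ j ∈ T, i + 2 ≤ j ∨ j + 2 ≤ i) →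
      IndepFun (fun ω (i : S) => X i ω) (fun ω (j : T) => X j ω) P)
    (r : ℕ) :
    iIndepFun (fun i => X (2 * i + r)) P := by
  rw [iIndepFun_iff_measure_inter_preimage_eq_mul]
  intro S
  induction S using Finset.induction_on_max with
  | empty => intro sets _; simp
  | insert a s hlt ih =>
    intro sets hsets
    have hanotin : a ∉ s := fun h => lt_irrefl a (hlt a h)
    have hmemT : ∀ i ∈ s, 2 * i + r ∈ s.image (fun i => 2 * i + r) :=
      fun i hi => Finset.mem_image_of_mem _ hi
    have hI := h1dep {2 * a + r} (s.image (fun i => 2 * i + r)) (by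
      intro i hi j hj
      rw [Finset.mem_singleton] at hi
      obtain ⟨x, hx, rfl⟩ := Finset.mem_image.mp hj
      right
      have := hlt x hx
      omega)
    rw [indepFun_iff_measure_inter_preimage_eq_mul] at hI
    set T := s.image (fun i => 2 * i + r) with hT
    set A : Set (({2 * a + r} : Finset ℕ) → Fin k → ℝ) :=
      (fun v : ({2 * a + r} : Finset ℕ) → Fin k → ℝ =>
        v ⟨2 * a + r, Finset.mem_singleton_self _⟩) ⁻¹' (sets a) with hAdef
    set B : Set (T → Fin k → ℝ) :=
      ⋂ i, ⋂ (hi : i ∈ s),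
        (fun v : T → Fin k → ℝ => v ⟨2 * i + r, hmemT i hi⟩) ⁻¹' (sets i) with hBdef
    have hA : MeasurableSet A :=
      (hsets a (Finset.mem_insert_self _ _)).preimage (measurable_pi_apply _)
    have hB : MeasurableSet B := by
      refine MeasurableSet.iInter fun i => MeasurableSet.iInter fun hi => ?_
      exact (hsets i (Finset.mem_insert_of_mem hi)).preimage (measurable_pi_apply _)
    have hfA : (fun ω (i : ({2 * a + r} : Finset ℕ)) => X i ω) ⁻¹' A
        = (fun i => X (2 * i + r)) a ⁻¹' sets a := rfl
    have hgB : (fun ω (j : T) => X j ω) ⁻¹' B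
        = ⋂ i ∈ s, (fun i => X (2 * i + r)) i ⁻¹' sets i := by
      ext ω
      simp only [hBdef, Set.mem_preimage, Set.mem_iInter]
    calc P (⋂ i ∈ insert a s, (fun i => X (2 * i + r)) i ⁻¹' sets i)
        = P (((fun i => X (2 * i + r)) a ⁻¹' sets a)
            ∩ ⋂ i ∈ s, (fun i => X (2 * i + r)) i ⁻¹' sets i) := by
          rw [Finset.set_biInter_insert]
      _ = P ((fun ω (i : ({2 * a + r} : Finset ℕ)) => X i ω) ⁻¹' A
            ∩ (fun ω (j : T) => X j ω) ⁻¹' B) := by rw [hfA, hgB]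
      _ = P ((fun ω (i : ({2 * a + r} : Finset ℕ)) => X i ω) ⁻¹' A)
            * P ((fun ω (j : T) => X j ω) ⁻¹' B) := hI A B hA hB
      _ = P ((fun i => X (2 * i + r)) a ⁻¹' sets a)
            * ∏ i ∈ s, P ((fun i => X (2 * i + r)) i ⁻¹' sets i) := by
          rw [hfA, hgB, ih (fun i hi => hsets i (Finset.mem_insert_of_mem hi))]
      _ = ∏ i ∈ insert a s, P ((fun i => X (2 * i + r)) i ⁻¹' sets i) := by
          rw [Finset.prod_insert hanotin]

lemma trueCdf_nonneg {Ω : Type*} [MeasurableSpace Ω] (P : Measure Ω) {k : ℕ}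
    (ξ : Ω → Fin k → ℝ) (t : Fin k → ℝ) : 0 ≤ trueCdf P ξ t :=
  ENNReal.toReal_nonneg

lemma trueCdf_le_one {Ω : Type*} [MeasurableSpace Ω] (P : Measure Ω)
    [IsProbabilityMeasure P] {k : ℕ} (ξ : Ω → Fin k → ℝ) (t : Fin k → ℝ) :
    trueCdf P ξ t ≤ 1 := by
  have h1 : P {ω | ∀ d, ξ ω d ≤ t d} ≤ 1 := prob_le_one
  calc trueCdf P ξ t ≤ (1 : ENNReal).toReal := ENNReal.toReal_mono (by simp) h1
    _ = 1 := by simp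

lemma indicator_one_nonneg {Ω : Type*} (s : Set Ω) (ω : Ω) :
    0 ≤ Set.indicator s (fun _ => (1 : ℝ)) ω := by
  unfold Set.indicator; split <;> norm_num

lemma indicator_one_le_one {Ω : Type*} (s : Set Ω) (ω : Ω) :
    Set.indicator s (fun _ => (1 : ℝ)) ω ≤ 1 := by
  unfold Set.indicator; split <;> norm_num

lemma emp_mem_unit {Ω : Type*} {k : ℕ} (Y : ℕ → Ω → Fin k → ℝ) (m : ℕ)
    (t : Fin k → ℝ) (ω : Ω) :
    0 ≤ (m : ℝ)⁻¹ * ∑ i ∈ Finset.range m,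
        Set.indicator {ω' | ∀ d, Y i ω' d ≤ t d} (fun _ => (1 : ℝ)) ω ∧
    (m : ℝ)⁻¹ * ∑ i ∈ Finset.range m,
        Set.indicator {ω' | ∀ d, Y i ω' d ≤ t d} (fun _ => (1 : ℝ)) ω ≤ 1 := by
  have h0 : 0 ≤ ∑ i ∈ Finset.range m,
      Set.indicator {ω' | ∀ d, Y i ω' d ≤ t d} (fun _ => (1 : ℝ)) ω :=
    Finset.sum_nonneg fun i _ => indicator_one_nonneg _ _
  have h1 : ∑ i ∈ Finset.range m,
      Set.indicator {ω' | ∀ d, Y i ω' d ≤ t d} (fun _ => (1 : ℝ)) ω ≤ m := by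
    calc ∑ i ∈ Finset.range m,
        Set.indicator {ω' | ∀ d, Y i ω' d ≤ t d} (fun _ => (1 : ℝ)) ω
        ≤ ∑ _i ∈ Finset.range m, (1 : ℝ) :=
          Finset.sum_le_sum fun i _ => indicator_one_le_one _ _
      _ = m := by simp
  constructor
  · positivity
  · rcases Nat.eq_zero_or_pos m with rfl | hm
    · simp
    · have hm' : (0 : ℝ) < m := by exact_mod_cast hm
      calc (m : ℝ)⁻¹ * ∑ i ∈ Finset.range m,
          Set.indicator {ω' | ∀ d, Y i ω' d ≤ t d} (fun _ => (1 : ℝ)) ω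
          ≤ (m : ℝ)⁻¹ * m := by
            apply mul_le_mul_of_nonneg_left h1 (by positivity)
        _ = 1 := by field_simp

lemma emp_bdd {Ω : Type*} [MeasurableSpace Ω] (P : Measure Ω) [IsProbabilityMeasure P]
    {k : ℕ} (Y : ℕ → Ω → Fin k → ℝ) (m : ℕ) (ξ₀ : Ω → Fin k → ℝ) (ω : Ω) :
    BddAbove (Set.range fun t : Fin k → ℝ =>
      |(m : ℝ)⁻¹ * ∑ i ∈ Finset.range m,
          Set.indicator {ω' | ∀ d, Y i ω' d ≤ t d} (fun _ => (1 : ℝ)) ω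
        - trueCdf P ξ₀ t|) := by
  refine ⟨2, ?_⟩
  rintro x ⟨t, rfl⟩
  obtain ⟨h0, h1⟩ := emp_mem_unit Y m t ω
  have h2 := trueCdf_nonneg P ξ₀ t
  have h3 := trueCdf_le_one P ξ₀ t
  rw [abs_le]
  constructor <;> linarith

set_option maxHeartbeats 1200000 in
/-- DKW-type inequality for 1-dependent sequences: if `X 0, X 1, ...` is a 1-dependent,
identically distributed sequence of random vectors in `ℝ^k` and the multivariate DKW
inequality holds for i.i.d. samples from the same distribution with constants
`ck, ck'`, then `P(sup_t |F_n(t) - F(t)| ≥ ε) ≤ 2 ck exp(-ck' n ε²/2)`. -/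
theorem dkw_one_dependent
    {Ω : Type*} [MeasurableSpace Ω] (P : Measure Ω) [IsProbabilityMeasure P]
    (k n : ℕ) (hn : 0 < n) (X : ℕ → Ω → Fin k → ℝ)
    (hmeas : ∀ i, Measurable (X i))
    (hid : ∀ i, Measure.map (X i) P = Measure.map (X 0) P)
    (h1dep : ∀ S T : Finset ℕ,
      (∀ i ∈ S, ∀ j ∈ T, i + 2 ≤ j ∨ j + 2 ≤ i) →
      IndepFun (fun ω (i : S) => X i ω) (fun ω (j : T) => X j ω) P)
    (ck ck' : ℝ) (hck : 0 < ck) (hck' : 0 < ck')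
    (hDKW : ∀ (m : ℕ), 0 < m → ∀ (Y : ℕ → Ω → Fin k → ℝ),
      (∀ i, Measurable (Y i)) →
      iIndepFun Y P →
      (∀ i, Measure.map (Y i) P = Measure.map (X 0) P) →
      ∀ ε : ℝ, 0 < ε →
        (P {ω | ε ≤ ksDist P Y m (X 0) ω}).toReal
          ≤ ck * Real.exp (-(ck' * m * ε ^ 2))) :
    ∀ ε : ℝ, 0 < ε →
      (P {ω | ε ≤ ksDist P X n (X 0) ω}).toReal
        ≤ 2 * ck * Real.exp (-(ck' * n * ε ^ 2 / 2)) := by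
  intro ε hε
  -- the even- and odd-indexed subsequences
  have hYindep : iIndepFun (fun i => X (2 * i)) P := by
    have := iIndep_of_one_dependent P X h1dep 0
    simpa using this
  have hZindep : iIndepFun (fun i => X (2 * i + 1)) P :=
    iIndep_of_one_dependent P X h1dep 1
  have hYmeas : ∀ i, Measurable ((fun i => X (2 * i)) i) := fun i => hmeas _
  have hZmeas : ∀ i, Measurable ((fun i => X (2 * i + 1)) i) := fun i => hmeas _
  have hYid : ∀ i, Measure.map ((fun i => X (2 * i)) i) P = Measure.map (X 0) P :=
    fun i => hid _
  have hZid : ∀ i, Measure.map ((fun i => X (2 * i + 1)) i) P = Measure.map (X 0) P :=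
    fun i => hid _
  rcases eq_or_lt_of_le (Nat.succ_le_of_lt hn) with h1 | h2
  · -- n = 1
    have hn1 : n = 1 := h1.symm
    subst hn1
    have hks : ksDist P (fun i => X (2 * i)) 1 (X 0) = ksDist P X 1 (X 0) := by
      funext ω
      simp [ksDist, Finset.sum_range_one]
    have h := hDKW 1 one_pos (fun i => X (2 * i)) hYmeas hYindep hYid ε hε
    rw [hks] at h
    norm_num at h ⊢
    refine h.trans ?_
    have hx : 0 ≤ ck' * ε ^ 2 := by positivity
    have he : Real.exp (-(ck' * ε ^ 2)) ≤ Real.exp (-(ck' * ε ^ 2 / 2)) := by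
      apply Real.exp_le_exp.mpr
      linarith
    nlinarith [Real.exp_pos (-(ck' * ε ^ 2 / 2)), he, Real.exp_pos (-(ck' * ε ^ 2))]
  · -- n ≥ 2
    have hn2 : 2 ≤ n := h2
    have hm1 : 0 < (n + 1) / 2 := by omega
    have hm2 : 0 < n / 2 := by omega
    have hm12 : (n + 1) / 2 + n / 2 = n := by omega
    set m1 : ℕ := (n + 1) / 2 with hm1def
    set m2 : ℕ := n / 2 with hm2def
    have hm1R : (0 : ℝ) < m1 := by exact_mod_cast hm1
    have hm2R : (0 : ℝ) < m2 := by exact_mod_cast hm2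
    have hnR : (0 : ℝ) < n := by exact_mod_cast hn
    have hm12R : (m1 : ℝ) + m2 = n := by exact_mod_cast hm12
    set α : ℝ := ε * Real.sqrt (n / (2 * m1)) with hαdef
    set β : ℝ := ε * Real.sqrt (n / (2 * m2)) with hβdef
    have hα : 0 < α := by
      apply mul_pos hε
      apply Real.sqrt_pos.mpr
      positivity
    have hβ : 0 < β := by
      apply mul_pos hε
      apply Real.sqrt_pos.mpr
      positivity
    have hα2 : α ^ 2 = ε ^ 2 * (n / (2 * m1)) := by
      rw [hαdef, mul_pow, Real.sq_sqrt (by positivity)]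
    have hβ2 : β ^ 2 = ε ^ 2 * (n / (2 * m2)) := by
      rw [hβdef, mul_pow, Real.sq_sqrt (by positivity)]
    -- the key weighted-average bound on the thresholds
    have hαβ : (m1 : ℝ) / n * α + (m2 : ℝ) / n * β ≤ ε := by
      set a : ℝ := Real.sqrt (n / (2 * m1)) with hadef
      set b : ℝ := Real.sqrt (n / (2 * m2)) with hbdef
      have ha0 : 0 ≤ a := Real.sqrt_nonneg _
      have hb0 : 0 ≤ b := Real.sqrt_nonneg _
      have ha2 : a ^ 2 = (n : ℝ) / (2 * m1) := Real.sq_sqrt (by positivity)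
      have hb2 : b ^ 2 = (n : ℝ) / (2 * m2) := Real.sq_sqrt (by positivity)
      have e1 : (m1 : ℝ) * a ^ 2 = n / 2 := by
        rw [ha2]; field_simp
      have e2 : (m2 : ℝ) * b ^ 2 = n / 2 := by
        rw [hb2]; field_simp
      have q1 : (m1 : ℝ) ^ 2 * a ^ 2 = m1 * (n / 2) := by rw [← e1]; ring
      have q2 : (m2 : ℝ) ^ 2 * b ^ 2 = m2 * (n / 2) := by rw [← e2]; ring
      have q4 : (m1 : ℝ) * m2 * a ^ 2 = m2 * (n / 2) := by rw [← e1]; ring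
      have q5 : (m1 : ℝ) * m2 * b ^ 2 = m1 * (n / 2) := by rw [← e2]; ring
      have q3 : 0 ≤ (m1 : ℝ) * m2 * (a - b) ^ 2 := by positivity
      have q6 : (n : ℝ) ^ 2 = n * m1 + n * m2 := by rw [← hm12R]; ring
      have hs0 : 0 ≤ (m1 : ℝ) * a + (m2 : ℝ) * b := by positivity
      have hkey : (m1 : ℝ) * a + (m2 : ℝ) * b ≤ n := by
        have hsq : ((m1 : ℝ) * a + (m2 : ℝ) * b) ^ 2 ≤ (n : ℝ) ^ 2 := by
          nlinarith [q1, q2, q3, q4, q5, q6]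
        nlinarith [hsq, hs0, hnR]
      have : (m1 : ℝ) / n * α + (m2 : ℝ) / n * β
          = ε / n * ((m1 : ℝ) * a + (m2 : ℝ) * b) := by
        rw [hαdef, hβdef]; field_simp
      rw [this]
      calc ε / n * ((m1 : ℝ) * a + (m2 : ℝ) * b) ≤ ε / n * n := by
            apply mul_le_mul_of_nonneg_left hkey (by positivity)
        _ = ε := by field_simp
    -- pointwise decomposition of the KS distance
    have hdecomp : ∀ ω, ksDist P X n (X 0) ω
        ≤ (m1 : ℝ) / n * ksDist P (fun i => X (2 * i)) m1 (X 0) ω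
          + (m2 : ℝ) / n * ksDist P (fun i => X (2 * i + 1)) m2 (X 0) ω := by
      intro ω
      have hb1 := emp_bdd P (fun i => X (2 * i)) m1 (X 0) ω
      have hb2 := emp_bdd P (fun i => X (2 * i + 1)) m2 (X 0) ω
      refine ciSup_le fun t => ?_
      have hsplit : ∑ i ∈ Finset.range n,
            Set.indicator {ω' | ∀ d, X i ω' d ≤ t d} (fun _ => (1 : ℝ)) ω
          = (∑ i ∈ Finset.range m1,
              Set.indicator {ω' | ∀ d, X (2 * i) ω' d ≤ t d} (fun _ => (1 : ℝ)) ω)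
            + ∑ i ∈ Finset.range m2,
              Set.indicator {ω' | ∀ d, X (2 * i + 1) ω' d ≤ t d} (fun _ => (1 : ℝ)) ω := by
        rw [hm1def, hm2def]
        exact sum_range_even_odd
          (fun i => Set.indicator {ω' | ∀ d, X i ω' d ≤ t d} (fun _ => (1 : ℝ)) ω) n
      have key : ∀ S1 S2 F : ℝ,
          (n : ℝ)⁻¹ * (S1 + S2) - F
            = (m1 : ℝ) / n * ((m1 : ℝ)⁻¹ * S1 - F)
              + (m2 : ℝ) / n * ((m2 : ℝ)⁻¹ * S2 - F) := by
        intro S1 S2 F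
        rw [← hm12R]
        field_simp
        ring
      have h1 : |(m1 : ℝ)⁻¹ * ∑ i ∈ Finset.range m1,
            Set.indicator {ω' | ∀ d, X (2 * i) ω' d ≤ t d} (fun _ => (1 : ℝ)) ω
          - trueCdf P (X 0) t| ≤ ksDist P (fun i => X (2 * i)) m1 (X 0) ω :=
        le_ciSup hb1 t
      have h2 : |(m2 : ℝ)⁻¹ * ∑ i ∈ Finset.range m2,
            Set.indicator {ω' | ∀ d, X (2 * i + 1) ω' d ≤ t d} (fun _ => (1 : ℝ)) ω
          - trueCdf P (X 0) t| ≤ ksDist P (fun i => X (2 * i + 1)) m2 (X 0) ω :=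
        le_ciSup hb2 t
      rw [hsplit, key]
      calc |(m1 : ℝ) / n * ((m1 : ℝ)⁻¹ * ∑ i ∈ Finset.range m1,
              Set.indicator {ω' | ∀ d, X (2 * i) ω' d ≤ t d} (fun _ => (1 : ℝ)) ω
            - trueCdf P (X 0) t)
          + (m2 : ℝ) / n * ((m2 : ℝ)⁻¹ * ∑ i ∈ Finset.range m2,
              Set.indicator {ω' | ∀ d, X (2 * i + 1) ω' d ≤ t d} (fun _ => (1 : ℝ)) ω
            - trueCdf P (X 0) t)|
          ≤ (m1 : ℝ) / n * |(m1 : ℝ)⁻¹ * ∑ i ∈ Finset.range m1,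
              Set.indicator {ω' | ∀ d, X (2 * i) ω' d ≤ t d} (fun _ => (1 : ℝ)) ω
            - trueCdf P (X 0) t|
          + (m2 : ℝ) / n * |(m2 : ℝ)⁻¹ * ∑ i ∈ Finset.range m2,
              Set.indicator {ω' | ∀ d, X (2 * i + 1) ω' d ≤ t d} (fun _ => (1 : ℝ)) ω
            - trueCdf P (X 0) t| := by
            refine (abs_add_le _ _).trans ?_
            rw [abs_mul, abs_mul, abs_of_nonneg (by positivity : (0:ℝ) ≤ (m1 : ℝ) / n),
              abs_of_nonneg (by positivity : (0:ℝ) ≤ (m2 : ℝ) / n)]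
        _ ≤ (m1 : ℝ) / n * ksDist P (fun i => X (2 * i)) m1 (X 0) ω
          + (m2 : ℝ) / n * ksDist P (fun i => X (2 * i + 1)) m2 (X 0) ω := by
            gcongr
    -- event inclusion
    have hsub : {ω | ε ≤ ksDist P X n (X 0) ω}
        ⊆ {ω | α ≤ ksDist P (fun i => X (2 * i)) m1 (X 0) ω}
          ∪ {ω | β ≤ ksDist P (fun i => X (2 * i + 1)) m2 (X 0) ω} := by
      intro ω hω
      rw [Set.mem_setOf_eq] at hω
      by_contra hc
      rw [Set.mem_union, Set.mem_setOf_eq, Set.mem_setOf_eq] at hc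
      push_neg at hc
      obtain ⟨hc1, hc2⟩ := hc
      have hd := hdecomp ω
      have s1 : (m1 : ℝ) / n * ksDist P (fun i => X (2 * i)) m1 (X 0) ω
          < (m1 : ℝ) / n * α := by
        apply mul_lt_mul_of_pos_left hc1 (by positivity)
      have s2 : (m2 : ℝ) / n * ksDist P (fun i => X (2 * i + 1)) m2 (X 0) ω
          < (m2 : ℝ) / n * β := by
        apply mul_lt_mul_of_pos_left hc2 (by positivity)
      linarith
    -- apply DKW to each subsample
    have hY := hDKW m1 hm1 (fun i => X (2 * i)) hYmeas hYindep hYid α hα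
    have hZ := hDKW m2 hm2 (fun i => X (2 * i + 1)) hZmeas hZindep hZid β hβ
    have hexpα : ck' * m1 * α ^ 2 = ck' * n * ε ^ 2 / 2 := by
      rw [hα2]; field_simp
    have hexpβ : ck' * m2 * β ^ 2 = ck' * n * ε ^ 2 / 2 := by
      rw [hβ2]; field_simp
    rw [hexpα] at hY
    rw [hexpβ] at hZ
    calc (P {ω | ε ≤ ksDist P X n (X 0) ω}).toReal
        ≤ (P ({ω | α ≤ ksDist P (fun i => X (2 * i)) m1 (X 0) ω}
            ∪ {ω | β ≤ ksDist P (fun i => X (2 * i + 1)) m2 (X 0) ω})).toReal :=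
          ENNReal.toReal_mono (measure_ne_top P _) (measure_mono hsub)
      _ ≤ (P {ω | α ≤ ksDist P (fun i => X (2 * i)) m1 (X 0) ω}).toReal
          + (P {ω | β ≤ ksDist P (fun i => X (2 * i + 1)) m2 (X 0) ω}).toReal := by
          refine le_trans (ENNReal.toReal_mono ?_ (measure_union_le _ _)) ?_
          · exact ENNReal.add_ne_top.mpr ⟨measure_ne_top P _, measure_ne_top P _⟩
          · rw [ENNReal.toReal_add (measure_ne_top P _) (measure_ne_top P _)]
      _ ≤ ck * Real.exp (-(ck' * n * ε ^ 2 / 2)) + ck * Real.exp (-(ck' * n * ε ^ 2 / 2)) :=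
          add_le_add hY hZ
      _ = 2 * ck * Real.exp (-(ck' * n * ε ^ 2 / 2)) := by ring
end
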